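/- arXiv:math/0511421 — 8 statements merged into one kernel-verified Lean document; each statement's English description precedes it below -/
import Mathlib

section
/- Let Γ be a full-rank lattice in R^d, A a dilation matrix for Γ, and H a finite nonempty subset of Γ. Then there exists a strictly increasing sequence {Ω_n}_{n≥0} of finite H-admissible subsets of Γ whose union is Γ, with Ω_0 = K_H ∩ Γ and A^{-1}(Ω_{n+1} + H) ∩ Γ ⊆ Ω_n for all n ≥ 0. -/
open Pointwise

/-- A full-rank lattice in `ℝ^d`: the `ℤ`-span (additive closure) of an `ℝ`-basis. -/
def IsLattice {d : ℕ} (Γ : AddSubgroup (Fin d → ℝ)) : Prop :=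
  ∃ B : Module.Basis (Fin d) ℝ (Fin d → ℝ), Γ = AddSubgroup.closure (Set.range ⇑B)

/-- `A` is a dilation matrix for `Γ`. -/
def IsDilation {d : ℕ} (A : Matrix (Fin d) (Fin d) ℝ) (Γ : AddSubgroup (Fin d → ℝ)) : Prop :=
  (∀ x ∈ Γ, A.mulVec x ∈ Γ) ∧ ∀ μ ∈ spectrum ℂ (A.map (Complex.ofReal ·)), 1 < ‖μ‖

/-- `Ω ⊆ Γ` is `H`-admissible: `A⁻¹(Ω + H) ∩ Γ ⊆ Ω`. -/
def Admissible {d : ℕ} (A : Matrix (Fin d) (Fin d) ℝ) (Γ : AddSubgroup (Fin d → ℝ))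
    (H Ω : Set (Fin d → ℝ)) : Prop :=
  ((fun x => A⁻¹.mulVec x) '' (Ω + H)) ∩ (Γ : Set (Fin d → ℝ)) ⊆ Ω

section Aux

open Filter Metric Bornology
open scoped Topology

/-- Bounded subsets of a full-rank lattice are finite. -/
theorem IsLattice.finite_inter {d : ℕ} {Γ : AddSubgroup (Fin d → ℝ)} (hΓ : IsLattice Γ)
    {s : Set (Fin d → ℝ)} (hs : IsBounded s) : (s ∩ (Γ : Set (Fin d → ℝ))).Finite := by
  obtain ⟨B, hB⟩ := hΓ
  have h1 : (Γ : Set (Fin d → ℝ)) =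
      ((Submodule.span ℤ (Set.range ⇑B)).toAddSubgroup : Set (Fin d → ℝ)) := by
    rw [hB, Submodule.span_int_eq_addSubgroupClosure]
  rw [h1]
  have : DiscreteTopology (Submodule.span ℤ (Set.range ⇑B)).toAddSubgroup := inferInstance
  exact Metric.finite_isBounded_inter_isClosed DiscreteTopology.isDiscrete hs inferInstance

attribute [local instance] Matrix.linftyOpNormedRing Matrix.linftyOpNormedAlgebra

/-- Powers of the inverse of a dilation matrix applied to a fixed vector tend to zero. -/
theorem pow_inv_mulVec_tendsto {d : ℕ} (hd : 0 < d) (A : Matrix (Fin d) (Fin d) ℝ)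
    (hspec : ∀ μ ∈ spectrum ℂ (A.map (Complex.ofReal ·)), 1 < ‖μ‖)
    (v : Fin d → ℝ) :
    Tendsto (fun j => ‖(A⁻¹ ^ j).mulVec v‖) atTop (𝓝 0) := by
  haveI : Nonempty (Fin d) := ⟨⟨0, hd⟩⟩
  set Ac := A.map (Complex.ofReal ·) with hAc
  have hunit : IsUnit Ac := by
    rw [← spectrum.zero_notMem_iff ℂ]
    intro h0
    exact absurd (hspec 0 h0) (by norm_num)
  set a := hunit.unit with ha
  have haval : (↑a : Matrix (Fin d) (Fin d) ℂ) = Ac := IsUnit.unit_spec hunit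
  have hsmall : ∀ μ ∈ spectrum ℂ ((↑a⁻¹ : Matrix (Fin d) (Fin d) ℂ)), ‖μ‖₊ < 1 := by
    intro μ hμ
    have hμ0 : μ ≠ 0 := spectrum.ne_zero_of_mem_of_unit hμ
    have h1 : (↑(Units.mk0 μ hμ0)⁻¹ : ℂ) ∈ spectrum ℂ (↑a : Matrix (Fin d) (Fin d) ℂ) := by
      rw [spectrum.inv_mem_iff]
      simpa using hμ
    have h4 : μ⁻¹ ∈ spectrum ℂ Ac := by rw [← haval]; simpa using h1
    have h3 : 1 < ‖μ⁻¹‖ := hspec _ h4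
    rw [norm_inv] at h3
    have habs : ‖μ‖ < 1 := (one_lt_inv_iff₀.mp h3).2
    rw [← NNReal.coe_lt_coe, coe_nnnorm, NNReal.coe_one]; exact habs
  have hρ : spectralRadius ℂ (↑a⁻¹ : Matrix (Fin d) (Fin d) ℂ) < 1 := by
    have := spectrum.spectralRadius_lt_of_forall_lt (↑a⁻¹ : Matrix (Fin d) (Fin d) ℂ)
      (r := 1) hsmall
    simpa using this
  have hgel := spectrum.pow_nnnorm_pow_one_div_tendsto_nhds_spectralRadius
    (↑a⁻¹ : Matrix (Fin d) (Fin d) ℂ)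
  obtain ⟨c, hc1, hc2⟩ := ENNReal.lt_iff_exists_nnreal_btwn.mp hρ
  have hcc : c < 1 := by exact_mod_cast hc2
  have hev : ∀ᶠ n : ℕ in atTop,
      (‖(↑a⁻¹ : Matrix (Fin d) (Fin d) ℂ) ^ n‖₊ : ENNReal) ^ (1 / (n:ℝ)) < (c : ENNReal) :=
    hgel.eventually_lt_const hc1
  have hev2 : ∀ᶠ n : ℕ in atTop, ‖(↑a⁻¹ : Matrix (Fin d) (Fin d) ℂ) ^ n‖ ≤ (c:ℝ) ^ n := by
    filter_upwards [hev, eventually_ge_atTop 1] with n hn hn1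
    have hne : ((n:ℝ)) ≠ 0 := by positivity
    have h5 := ENNReal.rpow_lt_rpow hn (show (0:ℝ) < (n:ℝ) by positivity)
    rw [← ENNReal.rpow_mul, one_div, inv_mul_cancel₀ hne, ENNReal.rpow_one,
      ENNReal.rpow_natCast] at h5
    have h6 : ‖(↑a⁻¹ : Matrix (Fin d) (Fin d) ℂ) ^ n‖₊ ≤ c ^ n := by
      have := h5.le
      rwa [← ENNReal.coe_pow, ENNReal.coe_le_coe] at this
    calc ‖(↑a⁻¹ : Matrix (Fin d) (Fin d) ℂ) ^ n‖
        = ((‖(↑a⁻¹ : Matrix (Fin d) (Fin d) ℂ) ^ n‖₊ : NNReal) : ℝ) := rfl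
      _ ≤ ((c ^ n : NNReal) : ℝ) := by exact_mod_cast h6
      _ = (c:ℝ) ^ n := by push_cast; ring
  have htendM : Tendsto (fun n : ℕ => ‖(↑a⁻¹ : Matrix (Fin d) (Fin d) ℂ) ^ n‖) atTop (𝓝 0) := by
    apply squeeze_zero' (Eventually.of_forall fun n => norm_nonneg _) hev2
    exact tendsto_pow_atTop_nhds_zero_of_lt_one c.coe_nonneg (by exact_mod_cast hcc)
  have hdet : IsUnit A.det := by
    have h7 : IsUnit Ac.det := hunit.map (Matrix.detMonoidHom)
    have h8 : Ac.det = Complex.ofReal A.det := by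
      rw [hAc]
      exact (RingHom.map_det Complex.ofRealHom A).symm
    rw [h8] at h7
    have h9 : A.det ≠ 0 := by
      intro h0
      rw [h0] at h7
      simp at h7
    exact isUnit_iff_ne_zero.mpr h9
  have hmapinv : (↑a⁻¹ : Matrix (Fin d) (Fin d) ℂ) = (A⁻¹).map (Complex.ofReal ·) := by
    rw [ha, Matrix.coe_units_inv, haval]
    apply Matrix.inv_eq_left_inv
    have : ((A⁻¹).map (Complex.ofReal ·)) * Ac = ((A⁻¹ * A).map (Complex.ofReal ·)) := by
      rw [hAc]
      exact (Matrix.map_mul (f := Complex.ofRealHom)).symm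
    rw [this, Matrix.nonsing_inv_mul A hdet]
    simp [Matrix.map_one]
  have hmappow : ∀ n : ℕ, (↑a⁻¹ : Matrix (Fin d) (Fin d) ℂ) ^ n
      = ((A⁻¹ ^ n)).map (Complex.ofReal ·) := by
    intro n
    induction n with
    | zero => simp [Matrix.map_one]
    | succ n ih =>
      rw [pow_succ, pow_succ, ih, hmapinv]
      exact (Matrix.map_mul (f := Complex.ofRealHom)).symm
  have hnormmap : ∀ B : Matrix (Fin d) (Fin d) ℝ, ‖B.map (Complex.ofReal ·)‖ = ‖B‖ := by
    intro B
    have h10 : ‖B.map (Complex.ofReal ·)‖₊ = ‖B‖₊ := by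
      simp [Matrix.linfty_opNNNorm_def, Matrix.map_apply]
    calc ‖B.map (Complex.ofReal ·)‖ = ((‖B.map (Complex.ofReal ·)‖₊ : NNReal) : ℝ) := rfl
      _ = ((‖B‖₊ : NNReal) : ℝ) := by rw [h10]
      _ = ‖B‖ := rfl
  have hbound : ∀ n : ℕ, ‖(A⁻¹ ^ n).mulVec v‖
      ≤ ‖(↑a⁻¹ : Matrix (Fin d) (Fin d) ℂ) ^ n‖ * ‖v‖ := by
    intro n
    calc ‖(A⁻¹ ^ n).mulVec v‖ ≤ ‖A⁻¹ ^ n‖ * ‖v‖ := Matrix.linfty_opNorm_mulVec _ _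
      _ = ‖(↑a⁻¹ : Matrix (Fin d) (Fin d) ℂ) ^ n‖ * ‖v‖ := by rw [hmappow, hnormmap]
  have hfin : Tendsto (fun n : ℕ => ‖(↑a⁻¹ : Matrix (Fin d) (Fin d) ℂ) ^ n‖ * ‖v‖)
      atTop (𝓝 0) := by
    simpa using htendM.mul_const ‖v‖
  exact squeeze_zero (fun n => norm_nonneg _) hbound hfin

end Aux

open Filter Metric Bornology
open scoped Topology

/-- there is a strictly increasing exhaustion of `Γ` by finite
`H`-admissible sets, starting from `Ω_0 = K_H ∩ Γ`, with
`A⁻¹(Ω_{n+1} + H) ∩ Γ ⊆ Ω_n` for all `n ≥ 0`. -/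
theorem exists_admissible_exhaustion (d : ℕ) (hd : 0 < d)
    (Γ : AddSubgroup (Fin d → ℝ))
    (A : Matrix (Fin d) (Fin d) ℝ) (H : Set (Fin d → ℝ))
    (hΓ : IsLattice Γ) (hA : IsDilation A Γ) (hH : H.Finite) (hHne : H.Nonempty)
    (hHΓ : H ⊆ Γ)
    (K : Set (Fin d → ℝ)) (hKne : K.Nonempty) (hKc : IsCompact K)
    (hKfix : K = (fun x => A⁻¹.mulVec x) '' (K + H)) :
    ∃ Ω : ℕ → Set (Fin d → ℝ),
      (∀ n, (Ω n).Finite) ∧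
      (∀ n, Ω n ⊆ (Γ : Set (Fin d → ℝ))) ∧
      (∀ n, Admissible A Γ H (Ω n)) ∧
      (∀ n, Ω n ⊂ Ω (n + 1)) ∧
      (⋃ n, Ω n) = (Γ : Set (Fin d → ℝ)) ∧
      Ω 0 = K ∩ (Γ : Set (Fin d → ℝ)) ∧
      (∀ n, ((fun x => A⁻¹.mulVec x) '' (Ω (n + 1) + H)) ∩ (Γ : Set (Fin d → ℝ)) ⊆ Ω n) := by
  classical
  obtain ⟨hAΓ, hspec⟩ := hA
  -- the attractor is invariant under the inverse maps
  have hKinv : ∀ x ∈ K, ∀ h ∈ H, A⁻¹.mulVec (x + h) ∈ K := by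
    intro x hx h hh
    rw [hKfix]
    exact ⟨x + h, Set.add_mem_add hx hh, rfl⟩
  -- Γ is infinite
  have hΓinf : (Γ : Set (Fin d → ℝ)).Infinite := by
    obtain ⟨B, hB⟩ := hΓ
    have hB0 : B ⟨0, hd⟩ ≠ 0 := B.ne_zero _
    apply Set.infinite_of_injective_forall_mem (f := fun k : ℕ => k • B ⟨0, hd⟩)
    · intro k l hkl
      simp only [← Nat.cast_smul_eq_nsmul ℝ] at hkl
      exact_mod_cast smul_left_injective ℝ hB0 hkl
    · intro k
      rw [hB]
      have hmem : B ⟨0, hd⟩ ∈ AddSubgroup.closure (Set.range ⇑B) :=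
        AddSubgroup.subset_closure (Set.mem_range_self _)
      exact AddSubgroup.nsmul_mem _ hmem k
  -- bound for K
  obtain ⟨r0, hr0⟩ := isBounded_iff_forall_norm_le.mp hKc.isBounded
  -- separation: lattice points close to K are in K
  obtain ⟨ε, hε, hsep⟩ : ∃ ε > 0, ∀ z ∈ (Γ : Set (Fin d → ℝ)), Metric.infDist z K ≤ ε → z ∈ K := by
    set T := {z | z ∈ (Γ : Set (Fin d → ℝ)) ∧ z ∉ K ∧ Metric.infDist z K ≤ 1} with hT
    have hTfin : T.Finite := by
      apply (hΓ.finite_inter (s := Metric.closedBall 0 (r0 + 2)) isBounded_closedBall).subset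
      intro z hz
      refine ⟨?_, hz.1⟩
      rw [Metric.mem_closedBall, dist_zero_right]
      obtain ⟨y, hy, hd2⟩ := (Metric.infDist_lt_iff hKne).mp (lt_of_le_of_lt hz.2.2 one_lt_two)
      calc ‖z‖ = ‖y + (z - y)‖ := by ring_nf
        _ ≤ ‖y‖ + ‖z - y‖ := norm_add_le _ _
        _ ≤ r0 + 2 := add_le_add (hr0 y hy) (by rw [← dist_eq_norm]; exact hd2.le)
    by_cases hTne : T.Nonempty
    · obtain ⟨z0, hz0, hmin⟩ := Set.exists_min_image T (fun z => Metric.infDist z K) hTfin hTne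
      have hz0pos : 0 < Metric.infDist z0 K :=
        (hKc.isClosed.notMem_iff_infDist_pos hKne).mp hz0.2.1
      refine ⟨min 1 (Metric.infDist z0 K / 2), by positivity, ?_⟩
      intro z hzΓ hzd
      by_contra hzK
      have hzT : z ∈ T := ⟨hzΓ, hzK, hzd.trans (min_le_left _ _)⟩
      have := hmin z hzT
      have : Metric.infDist z0 K ≤ Metric.infDist z0 K / 2 :=
        le_trans this (hzd.trans (min_le_right _ _))
      linarith
    · refine ⟨1, one_pos, ?_⟩
      intro z hzΓ hzd
      by_contra hzK
      exact hTne ⟨z, hzΓ, hzK, hzd⟩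
  obtain ⟨y0, hy0⟩ := hKne
  -- the predecessor operator
  set P : Set (Fin d → ℝ) → Set (Fin d → ℝ) := fun S =>
    {x | x ∈ (Γ : Set (Fin d → ℝ)) ∧
      ∀ h ∈ H, A⁻¹.mulVec (x + h) ∈ (Γ : Set (Fin d → ℝ)) → A⁻¹.mulVec (x + h) ∈ S} with hP
  set wit : Set (Fin d → ℝ) → ℝ := fun S =>
    if h : ∃ x, x ∈ P S ∧ x ∉ S then ‖h.choose‖ else 0 with hwitdef
  set rad : Set (Fin d → ℝ) → ℝ := fun S => sSup (insert 0 ((fun x => ‖x‖) '' S)) with hraddef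
  set ρ : ℕ → Set (Fin d → ℝ) → ℝ := fun n S => max (n : ℝ) (max (rad S) (wit S)) with hρdef
  set Ω : ℕ → Set (Fin d → ℝ) := fun n =>
    Nat.rec (K ∩ (Γ : Set (Fin d → ℝ)))
      (fun n S => P S ∩ Metric.closedBall 0 (ρ n S)) n with hΩdef
  have hΩ0 : Ω 0 = K ∩ (Γ : Set (Fin d → ℝ)) := rfl
  have hΩs : ∀ n, Ω (n + 1) = P (Ω n) ∩ Metric.closedBall 0 (ρ n (Ω n)) := fun n => rfl
  -- ρ bounds
  have hρn : ∀ (n : ℕ) (S : Set (Fin d → ℝ)), (n : ℝ) ≤ ρ n S := fun n S => le_max_left _ _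
  have hρrad : ∀ n (S : Set (Fin d → ℝ)), S.Finite → ∀ x ∈ S, ‖x‖ ≤ ρ n S := by
    intro n S hS x hx
    refine le_trans ?_ (le_max_of_le_right (le_max_left _ _))
    apply le_csSup ((hS.image _).insert 0).bddAbove
    exact Set.mem_insert_of_mem _ ⟨x, hx, rfl⟩
  have hρwit : ∀ n (S : Set (Fin d → ℝ)), (∃ x, x ∈ P S ∧ x ∉ S) →
      ∃ x, x ∈ P S ∧ x ∉ S ∧ ‖x‖ ≤ ρ n S := by
    intro n S h
    refine ⟨h.choose, h.choose_spec.1, h.choose_spec.2, ?_⟩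
    refine le_trans ?_ (le_max_of_le_right (le_max_right _ _))
    rw [hwitdef]
    simp only [dif_pos h]
    exact le_refl _
  -- basic invariants
  have hsub : ∀ n, Ω n ⊆ (Γ : Set (Fin d → ℝ)) := by
    intro n
    cases n with
    | zero => exact Set.inter_subset_right
    | succ n => rw [hΩs]; exact fun x hx => hx.1.1
  have hfin : ∀ n, (Ω n).Finite := by
    intro n
    cases n with
    | zero => exact hΓ.finite_inter hKc.isBounded
    | succ n =>
      apply (hΓ.finite_inter (s := Metric.closedBall 0 (ρ n (Ω n))) isBounded_closedBall).subset
      rw [hΩs]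
      exact fun x hx => ⟨hx.2, hx.1.1⟩
  have hPself : ∀ n, Ω n ⊆ P (Ω n) := by
    intro n
    induction n with
    | zero =>
      intro x hx
      exact ⟨hx.2, fun h hh hz => ⟨hKinv x hx.1 h hh, hz⟩⟩
    | succ n ih =>
      have hmono : Ω n ⊆ Ω (n + 1) := by
        intro x hx
        rw [hΩs]
        refine ⟨ih hx, ?_⟩
        rw [Metric.mem_closedBall, dist_zero_right]
        exact hρrad n _ (hfin n) x hx
      intro x hx
      rw [hΩs] at hx
      exact ⟨hx.1.1, fun h hh hz => hmono (hx.1.2 h hh hz)⟩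
  have hmono : ∀ n, Ω n ⊆ Ω (n + 1) := by
    intro n x hx
    rw [hΩs]
    refine ⟨hPself n hx, ?_⟩
    rw [Metric.mem_closedBall, dist_zero_right]
    exact hρrad n _ (hfin n) x hx
  have hmono' : ∀ m n, m ≤ n → Ω m ⊆ Ω n := fun m n h => monotone_nat_of_le_succ hmono h
  -- linking property
  have hlink : ∀ n, ((fun x => A⁻¹.mulVec x) '' (Ω (n + 1) + H)) ∩ (Γ : Set (Fin d → ℝ))
      ⊆ Ω n := by
    intro n z hz
    obtain ⟨⟨w, hw, rfl⟩, hzΓ⟩ := hz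
    rw [Set.mem_add] at hw
    obtain ⟨x, hx, h, hh, rfl⟩ := hw
    rw [hΩs] at hx
    exact hx.1.2 h hh hzΓ
  -- admissibility
  have hadm : ∀ n, Admissible A Γ H (Ω n) := by
    intro n
    cases n with
    | zero =>
      intro z hz
      obtain ⟨⟨w, hw, rfl⟩, hzΓ⟩ := hz
      rw [Set.mem_add] at hw
      obtain ⟨x, hx, h, hh, rfl⟩ := hw
      exact ⟨hKinv x hx.1 h hh, hzΓ⟩
    | succ n => exact fun z hz => hmono n (hlink n hz)
  -- strictness source
  have hstrict : ∀ n, ∃ x, x ∈ P (Ω n) ∧ x ∉ Ω n := by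
    intro n
    by_contra hcon
    push_neg at hcon
    obtain ⟨γ, hγΓ, hγn⟩ := (hΓinf.diff (hfin n)).nonempty
    have hstep : ∀ x : Fin d → ℝ, x ∈ (Γ : Set (Fin d → ℝ)) ∧ x ∉ Ω n →
        ∃ p : (Fin d → ℝ) × (Fin d → ℝ),
          ((A⁻¹.mulVec (x + p.2)) ∈ (Γ : Set (Fin d → ℝ)) ∧ (A⁻¹.mulVec (x + p.2)) ∉ Ω n)
          ∧ p.2 ∈ H ∧ p.1 = A⁻¹.mulVec (x + p.2) := by
      rintro x ⟨hxΓ, hxn⟩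
      have hnp : x ∉ P (Ω n) := fun hp => hxn (hcon x hp)
      have h2 : ¬ ∀ h ∈ H, A⁻¹.mulVec (x + h) ∈ (Γ : Set (Fin d → ℝ)) →
          A⁻¹.mulVec (x + h) ∈ Ω n := fun hall => hnp ⟨hxΓ, hall⟩
      push_neg at h2
      obtain ⟨h, hh, hzΓ, hzn⟩ := h2
      exact ⟨(A⁻¹.mulVec (x + h), h), ⟨hzΓ, hzn⟩, hh, rfl⟩
    choose F hF1 hF2 hF3 using hstep
    let g : ℕ → {x : Fin d → ℝ // x ∈ (Γ : Set (Fin d → ℝ)) ∧ x ∉ Ω n} := fun j =>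
      Nat.rec ⟨γ, hγΓ, hγn⟩ (fun _ p => ⟨A⁻¹.mulVec ((p : _) + (F p.1 p.2).2), hF1 p.1 p.2⟩) j
    have hg : ∀ j, (g (j + 1)).1
        = A⁻¹.mulVec ((g j).1 + (F (g j).1 (g j).2).2) := by intro j; rfl
    have hgH : ∀ j, (F (g j).1 (g j).2).2 ∈ H := fun j => hF2 _ _
    have htrack : ∀ j, ∃ y ∈ K, (g j).1 = y + (A⁻¹ ^ j).mulVec (γ - y0) := by
      intro j
      induction j with
      | zero =>
        refine ⟨y0, hy0, ?_⟩
        show γ = y0 + (A⁻¹ ^ 0).mulVec (γ - y0)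
        simp [Matrix.one_mulVec]
      | succ j ih =>
        obtain ⟨y, hy, hyeq⟩ := ih
        refine ⟨A⁻¹.mulVec (y + (F (g j).1 (g j).2).2), hKinv y hy _ (hgH j), ?_⟩
        rw [hg j]
        generalize (F (g j).1 (g j).2).2 = t
        rw [hyeq]
        rw [show y + (A⁻¹ ^ j).mulVec (γ - y0) + t
            = (y + t) + (A⁻¹ ^ j).mulVec (γ - y0) by ring]
        rw [Matrix.mulVec_add, Matrix.mulVec_mulVec, ← pow_succ']
    have htend := pow_inv_mulVec_tendsto hd A hspec (γ - y0)
    obtain ⟨N, hN⟩ := eventually_atTop.mp (htend.eventually_lt_const hε)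
    obtain ⟨y, hy, hyeq⟩ := htrack N
    have hinK : (g N).1 ∈ K := by
      apply hsep _ (g N).2.1
      calc Metric.infDist (g N).1 K ≤ dist (g N).1 y :=
        Metric.infDist_le_dist_of_mem hy
        _ = ‖(A⁻¹ ^ N).mulVec (γ - y0)‖ := by rw [dist_eq_norm, hyeq]; simp
        _ ≤ ε := (hN N le_rfl).le
    exact (g N).2.2 (hmono' 0 n (Nat.zero_le n) ⟨hinK, (g N).2.1⟩)
  -- exhaustion
  have hexh : ∀ γ ∈ (Γ : Set (Fin d → ℝ)), ∃ n, γ ∈ Ω n := by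
    intro γ hγ
    have htend := pow_inv_mulVec_tendsto hd A hspec (γ - y0)
    obtain ⟨N, hN⟩ := eventually_atTop.mp (htend.eventually_lt_const hε)
    obtain ⟨Cv, hCv⟩ : ∃ C, ∀ j, ‖(A⁻¹ ^ j).mulVec (γ - y0)‖ ≤ C := by
      obtain ⟨C, hC⟩ := htend.bddAbove_range
      exact ⟨C, fun j => hC ⟨j, rfl⟩⟩
    set R := r0 + Cv with hR
    set m0 := ⌈R⌉₊ with hm0
    let Reach : ℕ → Set (Fin d → ℝ) := fun j =>
      Nat.rec {γ} (fun _ S => ⋃ x ∈ S, (fun h => A⁻¹.mulVec (x + h)) '' H) j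
    have hReachs : ∀ j, Reach (j + 1) = ⋃ x ∈ Reach j, (fun h => A⁻¹.mulVec (x + h)) '' H :=
      fun _ => rfl
    have htrack : ∀ j, ∀ x ∈ Reach j, ∃ y ∈ K, x = y + (A⁻¹ ^ j).mulVec (γ - y0) := by
      intro j
      induction j with
      | zero =>
        intro x hx
        have hx' : x = γ := hx
        subst hx'
        refine ⟨y0, hy0, ?_⟩
        simp [Matrix.one_mulVec]
      | succ j ih =>
        intro x hx
        rw [hReachs] at hx
        simp only [Set.mem_iUnion, Set.mem_image] at hx
        obtain ⟨w, hw, h, hh, rfl⟩ := hx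
        obtain ⟨y, hy, rfl⟩ := ih w hw
        refine ⟨A⁻¹.mulVec (y + h), hKinv y hy h hh, ?_⟩
        rw [show y + (A⁻¹ ^ j).mulVec (γ - y0) + h = (y + h) + (A⁻¹ ^ j).mulVec (γ - y0) by ring]
        rw [Matrix.mulVec_add, Matrix.mulVec_mulVec, ← pow_succ']
    have hRbound : ∀ j, ∀ x ∈ Reach j, ‖x‖ ≤ R := by
      intro j x hx
      obtain ⟨y, hy, rfl⟩ := htrack j x hx
      calc ‖y + (A⁻¹ ^ j).mulVec (γ - y0)‖ ≤ ‖y‖ + ‖(A⁻¹ ^ j).mulVec (γ - y0)‖ := norm_add_le _ _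
        _ ≤ r0 + Cv := add_le_add (hr0 y hy) (hCv j)
    have hdown : ∀ i, ∀ j, j + i = N → ∀ x ∈ Reach j, x ∈ (Γ : Set (Fin d → ℝ)) →
        ∀ n, m0 ≤ n → x ∈ Ω (n + i) := by
      intro i
      induction i with
      | zero =>
        intro j hj x hx hxΓ n _
        obtain ⟨y, hy, rfl⟩ := htrack j x hx
        have hinK : y + (A⁻¹ ^ j).mulVec (γ - y0) ∈ K := by
          apply hsep _ hxΓ
          calc Metric.infDist (y + (A⁻¹ ^ j).mulVec (γ - y0)) K
              ≤ dist (y + (A⁻¹ ^ j).mulVec (γ - y0)) y := Metric.infDist_le_dist_of_mem hy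
            _ = ‖(A⁻¹ ^ j).mulVec (γ - y0)‖ := by rw [dist_eq_norm]; simp
            _ ≤ ε := (hN j (by omega)).le
        exact hmono' 0 (n + 0) (Nat.zero_le _) ⟨hinK, hxΓ⟩
      | succ i ih =>
        intro j hj x hx hxΓ n hn
        have hx1 : x ∈ P (Ω (n + i)) := by
          refine ⟨hxΓ, fun h hh hzΓ => ?_⟩
          refine ih (j + 1) (by omega) _ ?_ hzΓ n hn
          rw [hReachs]
          exact Set.mem_biUnion hx ⟨h, hh, rfl⟩
        have hx2 : x ∈ Metric.closedBall 0 (ρ (n + i) (Ω (n + i))) := by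
          rw [Metric.mem_closedBall, dist_zero_right]
          calc ‖x‖ ≤ R := hRbound j x hx
            _ ≤ (m0 : ℝ) := Nat.le_ceil R
            _ ≤ ((n + i : ℕ) : ℝ) := by exact_mod_cast Nat.le_trans hn (Nat.le_add_right n i)
            _ ≤ ρ (n + i) (Ω (n + i)) := hρn _ _
        have hfinal : x ∈ Ω ((n + i) + 1) := by
          rw [hΩs]
          exact ⟨hx1, hx2⟩
        have heq : n + (i + 1) = (n + i) + 1 := by omega
        rw [heq]
        exact hfinal
    refine ⟨m0 + N, ?_⟩
    have := hdown N 0 (by omega) γ rfl hγ m0 le_rfl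
    simpa using this
  -- assemble
  refine ⟨Ω, hfin, hsub, hadm, ?_, ?_, hΩ0, hlink⟩
  · intro n
    obtain ⟨x, hx1, hx2, hx3⟩ := hρwit n (Ω n) (hstrict n)
    refine ⟨hmono n, fun hsub' => hx2 (hsub' ?_)⟩
    rw [hΩs]
    exact ⟨hx1, by rw [Metric.mem_closedBall, dist_zero_right]; exact hx3⟩
  · apply Set.Subset.antisymm
    · exact Set.iUnion_subset hsub
    · intro γ hγ
      obtain ⟨n, hn⟩ := hexh γ hγ
      exact Set.mem_iUnion.mpr ⟨n, hn⟩
end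

section
/- Let Γ be a full-rank lattice in R^d, A a dilation matrix associated with Γ, Λ a finite subset of Γ, and L the Γ×Γ matrix with L_{ij} = c_{Ai−j} when Ai−j ∈ Λ and 0 otherwise, where (c_k)_{k∈Λ} are given complex coefficients. Let Ω ⊆ Γ be a Λ-admissible set. Then for every λ ∈ C, every r ∈ N, and all i ∉ Ω, j ∈ Ω, the entry [(L − λI)^r]_{ij} = 0. Consequently, if Y ∈ ℓ(Γ) (an infinite row vector) satisfies Y(L − λI)^r = 0, then the restriction P_Ω Y of Y to Ω satisfies (P_Ω Y)(T − λI)^r = 0, where T = [c_{Ai−j}]_{i,j∈Ω}. -/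
open scoped BigOperators

/-- Entrywise powers of a (possibly infinite) matrix, defined via finite sums
(`∑ᶠ`); these are well defined pointwise for row/column-finite matrices. -/
noncomputable def matPow {G : Type*} [DecidableEq G] (M : G → G → ℂ) : ℕ → G → G → ℂ
  | 0 => fun i j => if i = j then (1 : ℂ) else 0
  | r + 1 => fun i j => ∑ᶠ k, matPow M r i k * M k j

/-- for a `Λ`-admissible set `Ω`, the entries `[(L − λI)^r]_{ij}`
vanish for `i ∉ Ω`, `j ∈ Ω`; consequently `Y(L − λI)^r = 0` implies
`(P_Ω Y)(T − λI)^r = 0` where `T = [c_{Ai−j}]_{i,j∈Ω}`. -/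
theorem admissible_block_and_restriction (d : ℕ) (Γ : AddSubgroup (Fin d → ℝ))
    (A : Matrix (Fin d) (Fin d) ℝ) (Λ : Finset (Fin d → ℝ)) (c : (Fin d → ℝ) → ℂ)
    (hΓ : IsLattice Γ) (hA : IsDilation A Γ)
    (hΛ : (Λ : Set (Fin d → ℝ)) ⊆ (Γ : Set (Fin d → ℝ)))
    (hc : ∀ k, k ∉ Λ → c k = 0)
    (L : ↥Γ → ↥Γ → ℂ)
    (hL : L = fun (i j : ↥Γ) => c (A.mulVec i.1 - j.1))
    (Ω : Finset ↥Γ)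
    (hΩ : ∀ i : ↥Γ, (∃ w ∈ Ω, ∃ l ∈ Λ,
        A.mulVec (i : Fin d → ℝ) = ((w : ↥Γ) : Fin d → ℝ) + l) → i ∈ Ω)
    (lam : ℂ) (r : ℕ) :
    (∀ i ∉ Ω, ∀ j ∈ Ω,
        matPow (fun i j => L i j - if i = j then lam else 0) r i j = 0) ∧
    (∀ Y : ↥Γ → ℂ,
        (∀ j, ∑ᶠ i, Y i * matPow (fun i j => L i j - if i = j then lam else 0) r i j = 0) →
        Matrix.vecMul (fun i : {x // x ∈ Ω} => Y i.1)
          ((Matrix.of (fun i j : {x // x ∈ Ω} =>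
              c (A.mulVec ((i.1 : ↥Γ) : Fin d → ℝ) - ((j.1 : ↥Γ) : Fin d → ℝ)))
            - lam • 1) ^ r) = 0) := by
  classical
  have hLval : ∀ i j : ↥Γ, L i j = c (A.mulVec i.1 - j.1) := by
    intro i j; rw [hL]
  set M : ↥Γ → ↥Γ → ℂ := fun i j => L i j - if i = j then lam else 0 with hMdef
  set T' : Matrix {x // x ∈ Ω} {x // x ∈ Ω} ℂ :=
    (Matrix.of (fun i j : {x // x ∈ Ω} =>
        c (A.mulVec ((i.1 : ↥Γ) : Fin d → ℝ) - ((j.1 : ↥Γ) : Fin d → ℝ)))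
      - lam • 1) with hT'
  have hMzero : ∀ k, k ∉ Ω → ∀ j ∈ Ω, M k j = 0 := by
    intro k hk j hj
    have hkj : k ≠ j := fun h => hk (h ▸ hj)
    have hc0 : c (A.mulVec k.1 - j.1) = 0 := by
      by_contra h
      have hmem : A.mulVec k.1 - j.1 ∈ Λ := by
        by_contra h'; exact h (hc _ h')
      exact hk (hΩ k ⟨j, hj, _, hmem, by abel⟩)
    simp [hMdef, hLval, hc0, hkj]
  have part1 : ∀ r, ∀ i ∉ Ω, ∀ j ∈ Ω, matPow M r i j = 0 := by
    intro r
    induction r with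
    | zero =>
      intro i hi j hj
      have hij : i ≠ j := fun h => hi (h ▸ hj)
      simp [matPow, hij]
    | succ r ih =>
      intro i hi j hj
      have hz : ∀ k, matPow M r i k * M k j = 0 := by
        intro k
        by_cases hk : k ∈ Ω
        · rw [ih i hi k hk, zero_mul]
        · rw [hMzero k hk j hj, mul_zero]
      simp only [matPow]
      exact finsum_eq_zero_of_forall_eq_zero hz
  have hT'entry : ∀ (a b : {x // x ∈ Ω}), T' a b = M a.1 b.1 := by
    intro a b
    by_cases h : a = b
    · subst h
      simp [hT', hMdef, hLval, Matrix.one_apply]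
    · have h' : (a.1 : ↥Γ) ≠ b.1 := fun hh => h (Subtype.ext hh)
      simp [hT', hMdef, hLval, Matrix.one_apply, h, h']
  have block : ∀ r, ∀ (i j : ↥Γ) (hi : i ∈ Ω) (hj : j ∈ Ω),
      matPow M r i j = (T' ^ r) ⟨i, hi⟩ ⟨j, hj⟩ := by
    intro r
    induction r with
    | zero =>
      intro i j hi hj
      by_cases h : i = j
      · subst h; simp [matPow, Matrix.one_apply]
      · have h' : (⟨i, hi⟩ : {x // x ∈ Ω}) ≠ ⟨j, hj⟩ := fun hh => h (Subtype.ext_iff.mp hh)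
        simp [matPow, Matrix.one_apply, h, h']
    | succ r ih =>
      intro i j hi hj
      have hsupp : (Function.support fun k => matPow M r i k * M k j) ⊆ ↑Ω := by
        intro k hk
        by_contra hkΩ
        exact hk (by simp only [hMzero k hkΩ j hj, mul_zero])
      have h1 : matPow M (r + 1) i j = ∑ k ∈ Ω, matPow M r i k * M k j := by
        simp only [matPow]
        exact finsum_eq_finset_sum_of_support_subset _ hsupp
      rw [h1, pow_succ, Matrix.mul_apply,
        ← Finset.sum_coe_sort Ω (fun k => matPow M r i k * M k j)]
      apply Finset.sum_congr rfl
      intro k _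
      rw [ih i k.1 hi k.2, hT'entry k ⟨j, hj⟩]
  refine ⟨part1 r, ?_⟩
  intro Y hY
  funext j
  have h0 := hY j.1
  have hsupp : (Function.support fun i => Y i * matPow M r i (j.1 : ↥Γ)) ⊆ ↑Ω := by
    intro i hi
    by_contra hiΩ
    exact hi (by simp only [part1 r i hiΩ j.1 j.2, mul_zero])
  rw [finsum_eq_finset_sum_of_support_subset _ hsupp,
    ← Finset.sum_coe_sort Ω (fun i => Y i * matPow M r i j.1)] at h0
  have hcongr : ∀ i : {x // x ∈ Ω}, Y i.1 * matPow M r i.1 j.1 = Y i.1 * (T' ^ r) i j := by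
    intro i
    rw [block r i.1 j.1 i.2 j.2]
  rw [Finset.sum_congr rfl (fun i _ => hcongr i)] at h0
  simpa [Matrix.vecMul, dotProduct] using h0
end

section
/- Let Γ, A, Λ, L be as follows: Γ a full-rank lattice in R^d, A a dilation matrix, Λ ⊆ Γ finite, L_{ij} = c_{Ai−j} (zero if Ai−j ∉ Λ). Let {Ω_n}_{n≥0} be a strictly increasing sequence of Λ-admissible subsets of Γ with union Γ and A^{-1}(Ω_{n+1}+Λ)∩Γ ⊆ Ω_n for all n. Then for every r ∈ N, λ ∈ C, k ≥ 0, and indices j ∈ Ω_{k+1}, i ∉ Ω_k: [(L−λI)^r]_{ij} = 0 if i ≠ j, and [(L−λI)^r]_{jj} = (−λ)^r when j ∉ Ω_k. -/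
open scoped BigOperators

/-- for an admissible exhaustion `{Ω_n}` and `j ∈ Ω_{k+1}`, `i ∉ Ω_k`,
the entries of `(L − λI)^r` satisfy `[(L−λI)^r]_{ij} = 0` if `i ≠ j` and
`[(L−λI)^r]_{jj} = (−λ)^r` when `j ∉ Ω_k`. -/
theorem entries_of_power_outside (d : ℕ) (Γ : AddSubgroup (Fin d → ℝ))
    (A : Matrix (Fin d) (Fin d) ℝ) (Λ : Finset (Fin d → ℝ)) (c : (Fin d → ℝ) → ℂ)
    (hΓ : IsLattice Γ) (hA : IsDilation A Γ)
    (hΛ : (Λ : Set (Fin d → ℝ)) ⊆ (Γ : Set (Fin d → ℝ)))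
    (hc : ∀ k, k ∉ Λ → c k = 0)
    (L : ↥Γ → ↥Γ → ℂ)
    (hL : L = fun (i j : ↥Γ) => c (A.mulVec i.1 - j.1))
    (Ω : ℕ → Set ↥Γ)
    (hadm : ∀ n, ∀ i : ↥Γ, (∃ w ∈ Ω n, ∃ l ∈ Λ, A.mulVec i.1 = w.1 + l) → i ∈ Ω n)
    (hmono : ∀ n, Ω n ⊂ Ω (n + 1))
    (hunion : (⋃ n, Ω n) = Set.univ)
    (hstep : ∀ n, ∀ i : ↥Γ, (∃ w ∈ Ω (n + 1), ∃ l ∈ Λ, A.mulVec i.1 = w.1 + l) → i ∈ Ω n)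
    (lam : ℂ) (r : ℕ) :
    ∀ k : ℕ, ∀ j ∈ Ω (k + 1), ∀ i : ↥Γ, i ∉ Ω k →
      (i ≠ j → matPow (fun i j => L i j - if i = j then lam else 0) r i j = 0) ∧
      (i = j → matPow (fun i j => L i j - if i = j then lam else 0) r i j = (-lam) ^ r) := by
  induction r with
  | zero =>
    intro k j hj i hi
    constructor
    · intro hij; simp [matPow, hij]
    · intro hij; simp [matPow, hij]
  | succ r ih =>
    intro k j hj i hi
    set M : ↥Γ → ↥Γ → ℂ := fun i j => L i j - if i = j then lam else 0 with hM
    have hL0 : ∀ m : ↥Γ, m ∉ Ω k → L m j = 0 := by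
      intro m hm
      by_contra h
      apply hm
      apply hstep k m
      refine ⟨j, hj, A.mulVec m.1 - j.1, ?_, by abel⟩
      by_contra hmem
      exact h (by rw [hL]; exact hc _ hmem)
    have hsum : matPow M (r+1) i j = ∑ᶠ m, matPow M r i m * M m j := rfl
    have hzero : ∀ m : ↥Γ, m ≠ j → matPow M r i m * M m j = 0 := by
      intro m hm
      by_cases hmk : m ∈ Ω k
      · have hne : i ≠ m := fun h => hi (h ▸ hmk)
        rw [(ih k m ((hmono k).1 hmk) i hi).1 hne, zero_mul]
      · have : M m j = 0 := by simp [hM, hL0 m hmk, hm]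
        rw [this, mul_zero]
    by_cases hjk : j ∈ Ω k
    · have hij : i ≠ j := fun h => hi (h ▸ hjk)
      constructor
      · intro _
        rw [hsum, finsum_eq_single _ j hzero,
          (ih k j ((hmono k).1 hjk) i hi).1 hij, zero_mul]
      · intro h; exact absurd h hij
    · have hMjj : M j j = -lam := by simp [hM, hL0 j hjk]
      constructor
      · intro hij
        rw [hsum, finsum_eq_single _ j hzero, (ih k j hj i hi).1 hij, zero_mul]
      · intro hij
        rw [hsum, finsum_eq_single _ j hzero, hMjj, (ih k j hj i hi).2 hij]
        ring
end

section
/- Under the setup: Γ a full-rank lattice, A a dilation matrix, Λ ⊆ Γ finite, L_{ij} = c_{Ai−j} (zero if Ai−j ∉ Λ), {Ω_n} a strictly increasing exhaustion of Γ by Λ-admissible sets with A^{-1}(Ω_{n+1}+Λ)∩Γ ⊆ Ω_n, T_n = [c_{Ai−j}]_{i,j∈Ω_n}. Let λ ≠ 0, r ∈ N, n ≥ 0, and v a row vector indexed by Ω_n with v(T_n − λI)^r = 0. Then there exists Y ∈ ℓ(Γ) extending v (i.e., Y restricted to Ω_n equals v) with Y(L − λI)^r = 0. -/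
open scoped BigOperators

section Aux

variable {G : Type*} [DecidableEq G]

lemma matPow_mem (M : G → G → ℂ) (S : Set G)
    (hS : ∀ k ∈ S, ∀ i, M i k ≠ 0 → i ∈ S) :
    ∀ r : ℕ, ∀ j ∈ S, ∀ i, matPow M r i j ≠ 0 → i ∈ S := by
  intro r
  induction r with
  | zero =>
    intro j hj i h
    simp only [matPow] at h
    by_cases hij : i = j
    · subst hij; exact hj
    · simp [hij] at h
  | succ r ih =>
    intro j hj i h
    simp only [matPow] at h
    obtain ⟨k, hk⟩ : ∃ k, matPow M r i k * M k j ≠ 0 := by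
      by_contra hcon
      push_neg at hcon
      exact h (finsum_eq_zero_of_forall_eq_zero hcon)
    have h1 : matPow M r i k ≠ 0 := left_ne_zero_of_mul hk
    have h2 : M k j ≠ 0 := right_ne_zero_of_mul hk
    exact ih k (hS j hj k h2) i h1

lemma matPow_diag (M : G → G → ℂ) (S : Set G) (j : G) (μ : ℂ)
    (hS : ∀ k ∈ S, ∀ i, M i k ≠ 0 → i ∈ S)
    (hj : j ∉ S)
    (hcol : ∀ k, k ≠ j → M k j ≠ 0 → k ∈ S)
    (hMjj : M j j = μ) :
    ∀ r : ℕ, matPow M r j j = μ ^ r := by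
  intro r
  induction r with
  | zero => simp [matPow]
  | succ r ih =>
    simp only [matPow]
    rw [finsum_eq_single _ j ?_]
    · rw [ih, hMjj, pow_succ]
    · intro k hk
      by_cases hM : M k j = 0
      · simp [hM]
      · have hkS := hcol k hk hM
        have h0 : matPow M r j k = 0 := by
          by_contra h0
          exact hj (matPow_mem M S hS r k hkS j h0)
        simp [h0]

lemma matPow_restrict (M : G → G → ℂ) (s : Finset G)
    (hS : ∀ k ∈ s, ∀ i, M i k ≠ 0 → i ∈ s) :
    ∀ r : ℕ, ∀ i j : {x // x ∈ s},
      matPow M r i.1 j.1 = ((Matrix.of fun a b : {x // x ∈ s} => M a.1 b.1) ^ r) i j := by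
  intro r
  induction r with
  | zero =>
    intro i j
    simp only [matPow, pow_zero, Matrix.one_apply]
    by_cases h : i = j
    · simp [h]
    · have h' : i.1 ≠ j.1 := fun e => h (Subtype.ext e)
      simp [h, h']
  | succ r ih =>
    intro i j
    simp only [matPow]
    have hsupp : (Function.support fun k => matPow M r i.1 k * M k j.1) ⊆ ↑s := by
      intro k hk
      exact hS j.1 j.2 k (right_ne_zero_of_mul hk)
    rw [finsum_eq_finset_sum_of_support_subset _ hsupp, pow_succ, Matrix.mul_apply,
      ← Finset.sum_coe_sort s]
    refine Finset.sum_congr rfl fun k _ => ?_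
    rw [ih i k]
    rfl

noncomputable def Yaux (rank : G → ℕ) (step : G → (G → ℂ) → ℂ) (m : ℕ) (j : G) : ℂ :=
  step j (fun i => if _h : rank i < m then Yaux rank step (rank i) i else 0)
termination_by m

end Aux

/-- a row vector `v` on `Ω_n` with `v(T_n − λI)^r = 0`, `λ ≠ 0`,
extends to an infinite row vector `Y ∈ ℓ(Γ)` with `Y(L − λI)^r = 0`. -/
theorem extension_of_kernel_vector (d : ℕ) (Γ : AddSubgroup (Fin d → ℝ))
    (A : Matrix (Fin d) (Fin d) ℝ) (Λ : Finset (Fin d → ℝ)) (c : (Fin d → ℝ) → ℂ)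
    (hΓ : IsLattice Γ) (hA : IsDilation A Γ)
    (hΛ : (Λ : Set (Fin d → ℝ)) ⊆ (Γ : Set (Fin d → ℝ)))
    (hc : ∀ k, k ∉ Λ → c k = 0)
    (L : ↥Γ → ↥Γ → ℂ)
    (hL : L = fun (i j : ↥Γ) => c (A.mulVec i.1 - j.1))
    (Ω : ℕ → Finset ↥Γ)
    (hadm : ∀ n, ∀ i : ↥Γ, (∃ w ∈ Ω n, ∃ l ∈ Λ, A.mulVec i.1 = w.1 + l) → i ∈ Ω n)
    (hmono : ∀ n, Ω n ⊂ Ω (n + 1))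
    (hunion : (⋃ n, (Ω n : Set ↥Γ)) = Set.univ)
    (hstep : ∀ n, ∀ i : ↥Γ, (∃ w ∈ Ω (n + 1), ∃ l ∈ Λ, A.mulVec i.1 = w.1 + l) → i ∈ Ω n)
    (lam : ℂ) (hlam : lam ≠ 0) (r : ℕ) (n : ℕ)
    (v : {x // x ∈ Ω n} → ℂ)
    (hv : Matrix.vecMul v
        ((Matrix.of (fun i j : {x // x ∈ Ω n} => c (A.mulVec i.1.1 - j.1.1))
          - lam • 1) ^ r) = 0) :
    ∃ Y : ↥Γ → ℂ,
      (∀ i : {x // x ∈ Ω n}, Y i.1 = v i) ∧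
      (∀ j, ∑ᶠ i, Y i * matPow (fun i j => L i j - if i = j then lam else 0) r i j = 0) := by
  set M : ↥Γ → ↥Γ → ℂ := fun i j => L i j - if i = j then lam else 0 with hMdef
  set T : Matrix {x // x ∈ Ω n} {x // x ∈ Ω n} ℂ :=
    Matrix.of (fun i j : {x // x ∈ Ω n} => c (A.mulVec i.1.1 - j.1.1)) - lam • 1 with hT
  -- monotonicity of the exhaustion
  have hsub : ∀ {a b : ℕ}, a ≤ b → Ω a ⊆ Ω b := by
    intro a b hab
    induction hab with
    | refl => exact Finset.Subset.refl _
    | step h ih => exact ih.trans (subset_of_ssubset (hmono _))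
  have hex : ∀ j : ↥Γ, ∃ m, j ∈ Ω m := by
    intro j
    have : j ∈ ⋃ m, (Ω m : Set ↥Γ) := hunion ▸ Set.mem_univ j
    simpa using this
  set rank : ↥Γ → ℕ := fun j => Nat.find (hex j) with hrankdef
  have hrank_mem : ∀ j, j ∈ Ω (rank j) := fun j => Nat.find_spec (hex j)
  have hrank_le : ∀ j m, j ∈ Ω m → rank j ≤ m := fun j m h => Nat.find_le h
  have hrank_not : ∀ j m, m < rank j → j ∉ Ω m := fun j m h => Nat.find_min (hex j) h
  -- column support properties of M
  have hcol : ∀ m, ∀ k ∈ Ω m, ∀ i, M i k ≠ 0 → i ∈ Ω m := by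
    intro m k hk i hMik
    by_cases hik : i = k
    · subst hik; exact hk
    · have hLik : L i k ≠ 0 := by simpa [hMdef, hik] using hMik
      have hΛmem : A.mulVec i.1 - k.1 ∈ Λ := by
        by_contra hnot
        exact hLik (by rw [hL]; exact hc _ hnot)
      exact hadm m i ⟨k, hk, _, hΛmem, by abel⟩
  have hcolstep : ∀ m, ∀ j ∈ Ω (m+1), ∀ i, M i j ≠ 0 → i ∈ Ω m ∨ i = j := by
    intro m j hj i hMij
    by_cases hij : i = j
    · exact Or.inr hij
    · left
      have hLij : L i j ≠ 0 := by simpa [hMdef, hij] using hMij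
      have hΛmem : A.mulVec i.1 - j.1 ∈ Λ := by
        by_contra hnot
        exact hLij (by rw [hL]; exact hc _ hnot)
      exact hstep m i ⟨j, hj, _, hΛmem, by abel⟩
  have hMdiag : ∀ m, ∀ j ∈ Ω (m+1), j ∉ Ω m → M j j = -lam := by
    intro m j hj1 hj0
    have hLjj : L j j = 0 := by
      by_contra hne
      have hΛmem : A.mulVec j.1 - j.1 ∈ Λ := by
        by_contra hnot
        exact hne (by rw [hL]; exact hc _ hnot)
      exact hj0 (hstep m j ⟨j, hj1, _, hΛmem, by abel⟩)
    simp [hMdef, hLjj]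
  have hcolU : ∀ m, ∀ j ∈ Ω (m+1),
      ∀ k ∈ (↑(Ω m) ∪ {j} : Set ↥Γ), ∀ i, M i k ≠ 0 → i ∈ (↑(Ω m) ∪ {j} : Set ↥Γ) := by
    intro m j hj k hkmem i hMik
    rcases hkmem with hk | hk
    · exact Or.inl (hcol m k hk i hMik)
    · have hk' : k = j := hk
      subst hk'
      rcases hcolstep m k hj i hMik with h | h
      · exact Or.inl h
      · exact Or.inr h
  -- the recursive extension
  set step1 : ↥Γ → (↥Γ → ℂ) → ℂ := fun j f =>
    if h : j ∈ Ω n then v ⟨j, h⟩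
    else -((-lam) ^ r)⁻¹ * ∑ i ∈ Ω (rank j - 1), f i * matPow M r i j with hstepdef
  set Y : ↥Γ → ℂ := fun j => Yaux rank step1 (rank j) j with hYdef
  have hYeq : ∀ j, Y j = step1 j (fun i => if rank i < rank j then Y i else 0) := by
    intro j
    show Yaux rank step1 (rank j) j = _
    rw [Yaux.eq_def]
    have harg : (fun i => if _h : rank i < rank j then Yaux rank step1 (rank i) i else 0)
        = fun i => if rank i < rank j then Y i else 0 := by
      funext i
      by_cases h : rank i < rank j <;> simp [h, hYdef]
    rw [harg]
  have hY1 : ∀ i : {x // x ∈ Ω n}, Y i.1 = v i := by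
    intro i
    rw [hYeq, hstepdef]
    simp only [dif_pos i.2]
  refine ⟨Y, hY1, ?_⟩
  intro j
  by_cases hjn : j ∈ Ω n
  · have hsupp : (Function.support fun i => Y i * matPow M r i j) ⊆ ↑(Ω n) := by
      intro i hi
      exact matPow_mem M (↑(Ω n)) (fun k hk i' => hcol n k hk i') r j hjn i
        (right_ne_zero_of_mul hi)
    rw [finsum_eq_finset_sum_of_support_subset _ hsupp, ← Finset.sum_coe_sort (Ω n)]
    have hTM : (Matrix.of fun a b : {x // x ∈ Ω n} => M a.1 b.1) = T := by
      ext a b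
      by_cases h : a = b
      · subst h
        simp [hMdef, hT, hL, Matrix.sub_apply, Matrix.smul_apply, Matrix.one_apply]
      · have h' : a.1 ≠ b.1 := fun e => h (Subtype.ext e)
        simp [hMdef, hT, hL, Matrix.sub_apply, Matrix.smul_apply, Matrix.one_apply, h, h']
    have hterm : ∀ i : {x // x ∈ Ω n},
        Y i.1 * matPow M r i.1 j = v i * (T ^ r) i ⟨j, hjn⟩ := by
      intro i
      have := matPow_restrict M (Ω n) (fun k hk i' => hcol n k hk i') r i ⟨j, hjn⟩
      rw [hY1 i, this, hTM]
    simp only [hterm]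
    have hvj := congrFun hv ⟨j, hjn⟩
    simpa [Matrix.vecMul, dotProduct, Finset.univ_eq_attach] using hvj
  · have h0 : 0 < rank j := by
      rcases Nat.eq_zero_or_pos (rank j) with h | h
      · exact absurd (hsub (Nat.zero_le n) (h ▸ hrank_mem j)) hjn
      · exact h
    set m := rank j - 1 with hm
    have hm1 : rank j = m + 1 := (Nat.succ_pred_eq_of_pos h0).symm
    have hj1 : j ∈ Ω (m + 1) := hm1 ▸ hrank_mem j
    have hjm : j ∉ Ω m := hrank_not j m (by omega)
    have hSclosed := hcolU m j hj1
    have hsupp : (Function.support fun i => Y i * matPow M r i j) ⊆ ↑(insert j (Ω m)) := by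
      intro i hi
      have hmem := matPow_mem M (↑(Ω m) ∪ {j}) hSclosed r j (Or.inr rfl) i
        (right_ne_zero_of_mul hi)
      simpa [Finset.coe_insert, Set.mem_insert_iff, or_comm] using hmem
    rw [finsum_eq_finset_sum_of_support_subset _ hsupp, Finset.sum_insert (by simpa using hjm)]
    have hdiagv : matPow M r j j = (-lam) ^ r :=
      matPow_diag M (↑(Ω m)) j (-lam) (fun k hk i => hcol m k hk i) (by simpa using hjm)
        (fun k hk hM => by
          rcases hcolstep m j hj1 k hM with h | h
          · exact h
          · exact absurd h hk)
        (hMdiag m j hj1 hjm) r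
    have hYj : Y j = -((-lam) ^ r)⁻¹ * ∑ i ∈ Ω m, Y i * matPow M r i j := by
      rw [hYeq j, hstepdef]
      simp only [dif_neg hjn]
      rw [← hm]
      congr 1
      refine Finset.sum_congr rfl fun i hi => ?_
      have : rank i < rank j := lt_of_le_of_lt (hrank_le i m hi) (by omega)
      rw [if_pos this]
    rw [hYj, hdiagv]
    have hne : ((-lam) ^ r) ≠ 0 := pow_ne_zero r (neg_ne_zero.mpr hlam)
    field_simp
    ring
end

section
/- Under the same setup (L the infinite matrix of a refinement equation over a lattice Γ with Λ-admissible exhaustion {Ω_n}): if λ ≠ 0, Y ∈ ℓ(Γ), Y ≠ 0, and Y(L − λI)^r = 0 for some r ∈ N, then the restriction of Y to Ω_n is nonzero for every n ≥ 0. In particular, any extension of a vector v ∈ ker(T_n − λI)^r to an element of ker(L − λI)^r is unique. -/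
open scoped BigOperators

set_option linter.unusedSectionVars false
section Aux
variable {G : Type*} [DecidableEq G]

lemma matPow_succ_ne_zero {M : G → G → ℂ} {r : ℕ} {i j : G}
    (h : matPow M (r + 1) i j ≠ 0) : ∃ k, matPow M r i k ≠ 0 ∧ M k j ≠ 0 := by
  by_contra hc
  push_neg at hc
  apply h
  show (∑ᶠ k, matPow M r i k * M k j) = 0
  rw [finsum_eq_zero_of_forall_eq_zero]
  intro k
  rcases eq_or_ne (matPow M r i k) 0 with h0 | h0
  · rw [h0, zero_mul]
  · rw [hc k h0, mul_zero]

lemma matPow_colsupp_finite (M : G → G → ℂ) (hM : ∀ j, {i | M i j ≠ 0}.Finite) :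
    ∀ r j, {i | matPow M r i j ≠ 0}.Finite := by
  intro r
  induction r with
  | zero =>
    intro j
    apply Set.Finite.subset (Set.finite_singleton j)
    intro i hi
    simp only [Set.mem_setOf_eq, matPow] at hi
    rcases eq_or_ne i j with h | h
    · exact h ▸ rfl
    · simp [h] at hi
  | succ r ih =>
    intro j
    apply Set.Finite.subset ((hM j).biUnion (fun k _ => ih k))
    intro i hi
    obtain ⟨k, hk1, hk2⟩ := matPow_succ_ne_zero hi
    exact Set.mem_biUnion hk2 hk1

lemma matPow_colsupp_mono (M : G → G → ℂ) (S : Set G)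
    (hM : ∀ j ∈ S, ∀ i, M i j ≠ 0 → i ∈ S) :
    ∀ r, ∀ j ∈ S, ∀ i, matPow M r i j ≠ 0 → i ∈ S := by
  intro r
  induction r with
  | zero =>
    intro j hj i hi
    simp only [matPow] at hi
    by_contra hne
    rcases eq_or_ne i j with h | h
    · exact hne (h ▸ hj)
    · simp [h] at hi
  | succ r ih =>
    intro j hj i hi
    obtain ⟨k, hk1, hk2⟩ := matPow_succ_ne_zero hi
    exact ih k (hM j hj k hk2) i hk1

lemma finsum_mul_matPow_succ (M : G → G → ℂ) (hM : ∀ j, {i | M i j ≠ 0}.Finite)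
    (Y : G → ℂ) (r : ℕ) (j : G) :
    ∑ᶠ i, Y i * matPow M (r + 1) i j
      = ∑ᶠ k, (∑ᶠ i, Y i * matPow M r i k) * M k j := by
  classical
  set T : Finset G := (hM j).toFinset with hT
  set S : Finset G := T.biUnion (fun k => (matPow_colsupp_finite M hM r k).toFinset) with hS
  have hSmem : ∀ i k, k ∈ T → matPow M r i k ≠ 0 → i ∈ S := by
    intro i k hk h
    exact Finset.mem_biUnion.2 ⟨k, hk, (Set.Finite.mem_toFinset _).2 h⟩
  have hTmem : ∀ k, M k j ≠ 0 → k ∈ T := fun k h => (Set.Finite.mem_toFinset _).2 h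
  have hL : ∑ᶠ i, Y i * matPow M (r + 1) i j = ∑ i ∈ S, Y i * matPow M (r + 1) i j := by
    apply finsum_eq_finset_sum_of_support_subset
    intro i hi
    have hne : matPow M (r + 1) i j ≠ 0 := right_ne_zero_of_mul hi
    obtain ⟨k, hk1, hk2⟩ := matPow_succ_ne_zero hne
    exact hSmem i k (hTmem k hk2) hk1
  have hpow : ∀ i, matPow M (r + 1) i j = ∑ k ∈ T, matPow M r i k * M k j := by
    intro i
    apply finsum_eq_finset_sum_of_support_subset
    intro k hk
    exact hTmem k (right_ne_zero_of_mul hk)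
  have hW : ∀ k, k ∈ T → (∑ᶠ i, Y i * matPow M r i k) = ∑ i ∈ S, Y i * matPow M r i k := by
    intro k hk
    apply finsum_eq_finset_sum_of_support_subset
    intro i hi
    exact hSmem i k hk (right_ne_zero_of_mul hi)
  rw [hL]
  have hR : ∑ᶠ k, (∑ᶠ i, Y i * matPow M r i k) * M k j
      = ∑ k ∈ T, (∑ᶠ i, Y i * matPow M r i k) * M k j := by
    apply finsum_eq_finset_sum_of_support_subset
    intro k hk
    exact hTmem k (right_ne_zero_of_mul hk)
  rw [hR]
  calc ∑ i ∈ S, Y i * matPow M (r + 1) i j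
      = ∑ i ∈ S, ∑ k ∈ T, Y i * (matPow M r i k * M k j) := by
        refine Finset.sum_congr rfl (fun i _ => ?_)
        rw [hpow i, Finset.mul_sum]
    _ = ∑ k ∈ T, ∑ i ∈ S, Y i * (matPow M r i k * M k j) := Finset.sum_comm
    _ = ∑ k ∈ T, (∑ᶠ i, Y i * matPow M r i k) * M k j := by
        refine Finset.sum_congr rfl (fun k hk => ?_)
        rw [hW k hk, Finset.sum_mul]
        refine Finset.sum_congr rfl (fun i _ => ?_)
        ring

end Aux

section Aux2
variable {G : Type*} [DecidableEq G]

lemma omega_mono {Ω : ℕ → Set G} (hmono : ∀ n, Ω n ⊂ Ω (n + 1)) :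
    ∀ {a b : ℕ}, a ≤ b → Ω a ⊆ Ω b := by
  intro a b hab
  induction b, hab using Nat.le_induction with
  | base => exact subset_rfl
  | succ b hb ih => exact ih.trans (hmono b).subset

lemma step_one (B : G → G → ℂ) (Ω : ℕ → Set G)
    (hmono : ∀ n, Ω n ⊂ Ω (n + 1))
    (hunion : (⋃ n, Ω n) = Set.univ)
    (hoff : ∀ m, ∀ j ∈ Ω (m + 1), ∀ k, k ≠ j → B k j ≠ 0 → k ∈ Ω m)
    (hdiag : ∀ m, ∀ j ∈ Ω (m + 1), j ∈ Ω m ∨ B j j ≠ 0)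
    (n : ℕ) (Z : G → ℂ)
    (hZ : ∀ j, ∑ᶠ k, Z k * B k j = 0)
    (hvan : ∀ i ∈ Ω n, Z i = 0) : Z = 0 := by
  have key : ∀ m, n ≤ m → ∀ i ∈ Ω m, Z i = 0 := by
    intro m hm
    induction m, hm using Nat.le_induction with
    | base => exact hvan
    | succ m hb ih =>
      intro j hj
      have hsum : (∑ᶠ k, Z k * B k j) = Z j * B j j := by
        apply finsum_eq_single
        intro k hk
        rcases eq_or_ne (B k j) 0 with h0 | h0
        · rw [h0, mul_zero]
        · rw [ih k (hoff m j hj k hk h0), zero_mul]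
      rw [hZ j] at hsum
      rcases hdiag m j hj with h | h
      · exact ih j h
      · exact (mul_eq_zero.1 hsum.symm).resolve_right h
  funext i
  have : i ∈ ⋃ n, Ω n := hunion ▸ Set.mem_univ i
  obtain ⟨m, hm⟩ := Set.mem_iUnion.1 this
  have : i ∈ Ω (max n m) := omega_mono hmono (le_max_right n m) hm
  exact key (max n m) (le_max_left n m) i this

lemma main_lemma (B : G → G → ℂ) (Ω : ℕ → Set G)
    (hmono : ∀ n, Ω n ⊂ Ω (n + 1))
    (hunion : (⋃ n, Ω n) = Set.univ)
    (hBfin : ∀ j, {i | B i j ≠ 0}.Finite)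
    (hBinv : ∀ n, ∀ j ∈ Ω n, ∀ i, B i j ≠ 0 → i ∈ Ω n)
    (hoff : ∀ m, ∀ j ∈ Ω (m + 1), ∀ k, k ≠ j → B k j ≠ 0 → k ∈ Ω m)
    (hdiag : ∀ m, ∀ j ∈ Ω (m + 1), j ∈ Ω m ∨ B j j ≠ 0) :
    ∀ r (n : ℕ) (Y : G → ℂ),
      (∀ j, ∑ᶠ i, Y i * matPow B r i j = 0) → (∀ i ∈ Ω n, Y i = 0) → Y = 0 := by
  intro r
  induction r with
  | zero =>
    intro n Y hY _
    funext j
    have := hY j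
    rw [finsum_eq_single (fun i => Y i * matPow B 0 i j) j
      (by intro x hx; show Y x * (if x = j then (1:ℂ) else 0) = 0; simp [hx])] at this
    simpa [matPow] using this
  | succ r ih =>
    intro n Y hY hvan
    set W : G → ℂ := fun k => ∑ᶠ i, Y i * matPow B r i k with hWdef
    have hWzero : ∀ j, ∑ᶠ k, W k * B k j = 0 := by
      intro j
      rw [← finsum_mul_matPow_succ B hBfin Y r j]
      exact hY j
    have hWvan : ∀ k ∈ Ω n, W k = 0 := by
      intro k hk
      apply finsum_eq_zero_of_forall_eq_zero
      intro i
      rcases eq_or_ne (matPow B r i k) 0 with h0 | h0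
      · rw [h0, mul_zero]
      · rw [hvan i (matPow_colsupp_mono B (Ω n) (hBinv n) r k hk i h0), zero_mul]
    have hW : W = 0 := step_one B Ω hmono hunion hoff hdiag n W hWzero hWvan
    exact ih n Y (fun j => congrFun hW j) hvan

end Aux2

/-- if `λ ≠ 0`, `Y ≠ 0` and `Y(L − λI)^r = 0`, then the restriction
of `Y` to each `Ω_n` is nonzero; in particular extensions of kernel vectors of
`T_n − λI` to kernel vectors of `L − λI` are unique. -/
theorem restriction_nonzero_and_unique_extension (d : ℕ) (Γ : AddSubgroup (Fin d → ℝ))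
    (A : Matrix (Fin d) (Fin d) ℝ) (Λ : Finset (Fin d → ℝ)) (c : (Fin d → ℝ) → ℂ)
    (hΓ : IsLattice Γ) (hA : IsDilation A Γ)
    (hΛ : (Λ : Set (Fin d → ℝ)) ⊆ (Γ : Set (Fin d → ℝ)))
    (hc : ∀ k, k ∉ Λ → c k = 0)
    (L : ↥Γ → ↥Γ → ℂ)
    (hL : L = fun (i j : ↥Γ) => c (A.mulVec i.1 - j.1))
    (Ω : ℕ → Set ↥Γ)
    (hadm : ∀ n, ∀ i : ↥Γ, (∃ w ∈ Ω n, ∃ l ∈ Λ, A.mulVec i.1 = w.1 + l) → i ∈ Ω n)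
    (hmono : ∀ n, Ω n ⊂ Ω (n + 1))
    (hunion : (⋃ n, Ω n) = Set.univ)
    (hstep : ∀ n, ∀ i : ↥Γ, (∃ w ∈ Ω (n + 1), ∃ l ∈ Λ, A.mulVec i.1 = w.1 + l) → i ∈ Ω n)
    (lam : ℂ) (hlam : lam ≠ 0) (r : ℕ) :
    (∀ Y : ↥Γ → ℂ, Y ≠ 0 →
      (∀ j, ∑ᶠ i, Y i * matPow (fun i j => L i j - if i = j then lam else 0) r i j = 0) →
      ∀ n, ∃ i ∈ Ω n, Y i ≠ 0) ∧
    (∀ n, ∀ Y₁ Y₂ : ↥Γ → ℂ,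
      (∀ j, ∑ᶠ i, Y₁ i * matPow (fun i j => L i j - if i = j then lam else 0) r i j = 0) →
      (∀ j, ∑ᶠ i, Y₂ i * matPow (fun i j => L i j - if i = j then lam else 0) r i j = 0) →
      (∀ i ∈ Ω n, Y₁ i = Y₂ i) → Y₁ = Y₂) := by
  classical
  set B : ↥Γ → ↥Γ → ℂ := fun i j => L i j - if i = j then lam else 0 with hB
  -- A is invertible
  have hdet : IsUnit A.det := by
    by_contra hd
    have hdet0 : A.det = 0 := by
      rcases eq_or_ne A.det 0 with h | h
      · exact h
      · exact absurd (isUnit_iff_ne_zero.2 h) hd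
    have : ¬ IsUnit (A.map (Complex.ofReal ·)) := by
      rw [Matrix.isUnit_iff_isUnit_det]
      have : (A.map (Complex.ofReal ·)).det = 0 := by
        rw [show A.map (Complex.ofReal ·) = Complex.ofRealHom.mapMatrix A from rfl,
          ← Complex.ofRealHom.map_det, hdet0]
        simp
      rw [this]
      exact not_isUnit_zero
    have h0 : (0 : ℂ) ∈ spectrum ℂ (A.map (Complex.ofReal ·)) :=
      (spectrum.zero_mem_iff ℂ).2 this
    have := hA.2 0 h0
    norm_num at this
  -- mulVec injective
  have hinj : Function.Injective A.mulVec := by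
    intro x y hxy
    have h1 : A⁻¹ * A = 1 := Matrix.nonsing_inv_mul A hdet
    have := congrArg (A⁻¹.mulVec) hxy
    rwa [Matrix.mulVec_mulVec, Matrix.mulVec_mulVec, h1, Matrix.one_mulVec,
      Matrix.one_mulVec] at this
  -- the key consequence of c's support: B off the "stencil" vanishes
  have hLmem : ∀ i j : ↥Γ, L i j ≠ 0 → ∃ l ∈ Λ, A.mulVec i.1 = j.1 + l := by
    intro i j h
    rw [hL] at h
    by_contra hcon
    push_neg at hcon
    apply h
    apply hc
    intro hmem
    have := hcon _ hmem
    apply this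
    abel
  have hBfin : ∀ j : ↥Γ, {i : ↥Γ | B i j ≠ 0}.Finite := by
    intro j
    have hsub : {i : ↥Γ | B i j ≠ 0} ⊆
        {j} ∪ ((fun i : ↥Γ => A.mulVec i.1) ⁻¹' ((fun l => j.1 + l) '' (Λ : Set _))) := by
      intro i hi
      rcases eq_or_ne i j with h | h
      · exact Or.inl h
      · have hiL : L i j ≠ 0 := by
          simp only [Set.mem_setOf_eq, hB, if_neg h, sub_zero] at hi
          exact hi
        obtain ⟨l, hl, hAl⟩ := hLmem i j hiL
        exact Or.inr ⟨l, hl, hAl.symm⟩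
    apply Set.Finite.subset _ hsub
    apply (Set.finite_singleton j).union
    apply Set.Finite.preimage
    · intro x _ y _ h
      exact Subtype.ext (hinj h)
    · exact (Λ.finite_toSet).image _
  have hΩsucc : ∀ n, Ω n ⊆ Ω (n + 1) := fun n => (hmono n).subset
  have hBinv : ∀ n, ∀ j ∈ Ω n, ∀ i : ↥Γ, B i j ≠ 0 → i ∈ Ω n := by
    intro n j hj i hi
    rcases eq_or_ne i j with h | h
    · exact h ▸ hj
    · have hiL : L i j ≠ 0 := by
        simp only [hB, if_neg h, sub_zero] at hi
        exact hi
      obtain ⟨l, hl, hAl⟩ := hLmem i j hiL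
      exact hstep n i ⟨j, hΩsucc n hj, l, hl, hAl⟩
  have hoff : ∀ m, ∀ j ∈ Ω (m + 1), ∀ k : ↥Γ, k ≠ j → B k j ≠ 0 → k ∈ Ω m := by
    intro m j hj k hk hB0
    have hkL : L k j ≠ 0 := by
      simp only [hB, if_neg hk, sub_zero] at hB0
      exact hB0
    obtain ⟨l, hl, hAl⟩ := hLmem k j hkL
    exact hstep m k ⟨j, hj, l, hl, hAl⟩
  have hdiag : ∀ m, ∀ j ∈ Ω (m + 1), j ∈ Ω m ∨ B j j ≠ 0 := by
    intro m j hj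
    rcases eq_or_ne (L j j) 0 with h | h
    · right
      simp only [hB, h, if_pos rfl, zero_sub, ne_eq, neg_eq_zero]
      exact hlam
    · left
      obtain ⟨l, hl, hAl⟩ := hLmem j j h
      exact hstep m j ⟨j, hj, l, hl, hAl⟩
  have main := main_lemma B Ω hmono hunion hBfin hBinv hoff hdiag r
  constructor
  · intro Y hY0 hYk n
    by_contra hcon
    push_neg at hcon
    exact hY0 (main n Y hYk hcon)
  · intro n Y₁ Y₂ h₁ h₂ hagree
    have hsub : ∀ j, ∑ᶠ i, (Y₁ i - Y₂ i) * matPow B r i j = 0 := by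
      intro j
      have hfin := matPow_colsupp_finite B hBfin r j
      set S : Finset ↥Γ := hfin.toFinset with hS
      have hmem : ∀ (Z : ↥Γ → ℂ), ∑ᶠ i, Z i * matPow B r i j = ∑ i ∈ S, Z i * matPow B r i j := by
        intro Z
        apply finsum_eq_finset_sum_of_support_subset
        intro i hi
        exact (Set.Finite.mem_toFinset _).2 (right_ne_zero_of_mul hi)
      rw [hmem, ]
      have := Finset.sum_sub_distrib (s := S) (f := fun i => Y₁ i * matPow B r i j)
        (g := fun i => Y₂ i * matPow B r i j)
      calc ∑ i ∈ S, (Y₁ i - Y₂ i) * matPow B r i j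
          = ∑ i ∈ S, (Y₁ i * matPow B r i j - Y₂ i * matPow B r i j) := by
            refine Finset.sum_congr rfl (fun i _ => ?_); ring
        _ = ∑ i ∈ S, Y₁ i * matPow B r i j - ∑ i ∈ S, Y₂ i * matPow B r i j :=
            Finset.sum_sub_distrib _ _
        _ = 0 := by rw [← hmem Y₁, ← hmem Y₂, h₁ j, h₂ j, sub_zero]
    have hvan : ∀ i ∈ Ω n, (Y₁ - Y₂) i = 0 := by
      intro i hi
      simp [hagree i hi]
    have := main n (Y₁ - Y₂) (by intro j; simpa using hsub j) hvan
    funext i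
    have := congrFun this i
    simpa [sub_eq_zero] using this
end

section
/- Let φ: R^d → C be a compactly supported solution of the refinement equation φ(x) = Σ_{k∈Λ} c_k φ(Ax − k) with Λ ⊆ Γ finite, and suppose the Γ-translates {φ(·−k)}_{k∈Γ} are linearly independent (i.e., Σ_k α_k φ(·−k) ≡ 0 implies α_k = 0 for all k). Then the operator Y ↦ YL on ℓ(Γ), where L_{ij} = c_{Ai−j} (zero if Ai−j ∉ Λ), is injective. -/
open scoped BigOperators

/-- In a lattice, the coordinates of any element w.r.t. the generating basis are integers. -/
lemma IsLattice.repr_int {d : ℕ} (B : Module.Basis (Fin d) ℝ (Fin d → ℝ))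
    {x : Fin d → ℝ} (hx : x ∈ AddSubgroup.closure (Set.range ⇑B)) :
    ∀ i, ∃ n : ℤ, B.repr x i = (n : ℝ) := by
  induction hx using AddSubgroup.closure_induction with
  | mem y hy =>
      obtain ⟨j, rfl⟩ := hy
      intro i
      refine ⟨if j = i then 1 else 0, ?_⟩
      rw [Module.Basis.repr_self, Finsupp.single_apply]
      split <;> simp
  | zero => intro i; exact ⟨0, by simp⟩
  | add y z _ _ hy hz =>
      intro i
      obtain ⟨n, hn⟩ := hy i
      obtain ⟨m, hm⟩ := hz i
      exact ⟨n + m, by rw [map_add, Finsupp.add_apply, hn, hm]; push_cast [Int.cast_add]; ring⟩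
  | neg y _ hy =>
      intro i
      obtain ⟨n, hn⟩ := hy i
      exact ⟨-n, by rw [map_neg, Finsupp.neg_apply, hn]; push_cast; ring⟩

/-- A lattice intersects every compact set in finitely many points. -/
lemma IsLattice.finite_inter_s10 {d : ℕ} {Γ : AddSubgroup (Fin d → ℝ)} (hΓ : IsLattice Γ)
    {K : Set (Fin d → ℝ)} (hK : IsCompact K) :
    {γ : ↥Γ | (γ : Fin d → ℝ) ∈ K}.Finite := by
  obtain ⟨B, rfl⟩ := hΓ
  have hcont : Continuous fun x : Fin d → ℝ => (B.equivFun x : Fin d → ℝ) :=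
    LinearMap.continuous_of_finiteDimensional (B.equivFun : (Fin d → ℝ) →ₗ[ℝ] (Fin d → ℝ))
  obtain ⟨C, hC⟩ := hK.exists_bound_of_continuousOn hcont.continuousOn
  -- integer coordinates
  have hg : ∀ γ : ↥(AddSubgroup.closure (Set.range ⇑B)),
      ∃ n : Fin d → ℤ, ∀ i, B.repr (γ : Fin d → ℝ) i = (n i : ℝ) := by
    intro γ
    exact ⟨fun i => (IsLattice.repr_int B γ.2 i).choose,
      fun i => (IsLattice.repr_int B γ.2 i).choose_spec⟩
  choose g hgspec using hg
  have hginj : Function.Injective g := by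
    intro γ γ' h
    apply Subtype.ext
    apply B.repr.injective
    ext i
    rw [hgspec γ i, hgspec γ' i, h]
  have himg : g '' {γ : ↥(AddSubgroup.closure (Set.range ⇑B)) | (γ : Fin d → ℝ) ∈ K}
      ⊆ Set.Icc (fun _ => -⌈C⌉) (fun _ => ⌈C⌉) := by
    rintro _ ⟨γ, hγ, rfl⟩
    have habs : ∀ i, |(g γ i : ℝ)| ≤ C := by
      intro i
      have h1 : |(g γ i : ℝ)| = ‖(B.equivFun (γ : Fin d → ℝ)) i‖ := by
        rw [Module.Basis.equivFun_apply, hgspec γ i, Real.norm_eq_abs]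
      rw [h1]
      exact (norm_le_pi_norm _ i).trans (hC _ hγ)
    constructor
    · intro i
      have := (habs i)
      have h2 : (-⌈C⌉ : ℝ) ≤ (g γ i : ℝ) := by
        have := (abs_le.mp (habs i)).1
        have h3 : (C : ℝ) ≤ ⌈C⌉ := Int.le_ceil C
        linarith
      exact_mod_cast h2
    · intro i
      have h2 : ((g γ i : ℝ)) ≤ (⌈C⌉ : ℝ) :=
        le_trans (abs_le.mp (habs i)).2 (Int.le_ceil C)
      exact_mod_cast h2
  have hfin : (g '' {γ : ↥(AddSubgroup.closure (Set.range ⇑B)) | (γ : Fin d → ℝ) ∈ K}).Finite :=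
    (Set.finite_Icc _ _).subset himg
  exact Set.Finite.of_finite_image hfin hginj.injOn

/-- A dilation matrix is invertible, hence `mulVec` is injective. -/
lemma IsDilation.mulVec_injective {d : ℕ} {A : Matrix (Fin d) (Fin d) ℝ}
    {Γ : AddSubgroup (Fin d → ℝ)} (hA : IsDilation A Γ) :
    Function.Injective A.mulVec := by
  rw [Matrix.mulVec_injective_iff_isUnit, Matrix.isUnit_iff_isUnit_det]
  by_contra h
  have hdet : A.det = 0 := by
    simpa [isUnit_iff_ne_zero, not_not] using h
  have hmap : (A.map (Complex.ofReal ·)).det = 0 := by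
    have : A.map (Complex.ofReal ·) = (Complex.ofRealHom).mapMatrix A := rfl
    rw [this, ← RingHom.map_det, hdet]
    simp
  have h0 : (0 : ℂ) ∈ spectrum ℂ (A.map (Complex.ofReal ·)) := by
    rw [spectrum.zero_mem_iff, Matrix.isUnit_iff_isUnit_det, hmap]
    simp
  have := hA.2 0 h0
  rw [norm_zero] at this
  linarith

/-- if the `Γ`-translates of a compactly supported refinable `φ`
are linearly independent, then `Y ↦ YL` is injective on `ℓ(Γ)`. -/
theorem rowMul_injective (d : ℕ) (Γ : AddSubgroup (Fin d → ℝ))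
    (A : Matrix (Fin d) (Fin d) ℝ) (Λ : Finset (Fin d → ℝ)) (c : (Fin d → ℝ) → ℂ)
    (φ : (Fin d → ℝ) → ℂ)
    (hΓ : IsLattice Γ) (hA : IsDilation A Γ)
    (hΛ : (Λ : Set (Fin d → ℝ)) ⊆ (Γ : Set (Fin d → ℝ)))
    (hc : ∀ k, k ∉ Λ → c k = 0)
    (hsupp : HasCompactSupport φ)
    (href : ∀ x, φ x = ∑ k ∈ Λ, c k * φ (A.mulVec x - k))
    (hind : ∀ α : ↥Γ → ℂ, (∀ x, ∑ᶠ k : ↥Γ, α k * φ (x - k.1) = 0) → α = 0)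
    (L : ↥Γ → ↥Γ → ℂ)
    (hL : L = fun (i j : ↥Γ) => c (A.mulVec i.1 - j.1)) :
    Function.Injective (fun Y : ↥Γ → ℂ => fun j => ∑ᶠ i, Y i * L i j) := by
  classical
  have hAinj : Function.Injective A.mulVec := hA.mulVec_injective
  intro Y Y' hYY'
  set Z : ↥Γ → ℂ := Y - Y' with hZdef
  -- columns of L have finite support
  have hcol : ∀ j : ↥Γ, {i : ↥Γ | A.mulVec i.1 - j.1 ∈ (Λ : Set (Fin d → ℝ))}.Finite := by
    intro j
    have hinj : Function.Injective (fun i : ↥Γ => A.mulVec i.1) :=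
      hAinj.comp Subtype.val_injective
    have hfinim : ((fun k => k + j.1) '' (Λ : Set (Fin d → ℝ))).Finite :=
      Λ.finite_toSet.image _
    have hsub : {i : ↥Γ | A.mulVec i.1 - j.1 ∈ (Λ : Set (Fin d → ℝ))}
        ⊆ (fun i : ↥Γ => A.mulVec i.1) ⁻¹' ((fun k => k + j.1) '' (Λ : Set (Fin d → ℝ))) := by
      intro i hi
      exact ⟨A.mulVec i.1 - j.1, hi, by simp⟩
    exact (hfinim.preimage hinj.injOn).subset hsub
  have hsuppL : ∀ (W : ↥Γ → ℂ) (j : ↥Γ),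
      Function.support (fun i => W i * L i j)
        ⊆ {i : ↥Γ | A.mulVec i.1 - j.1 ∈ (Λ : Set (Fin d → ℝ))} := by
    intro W j i hi
    by_contra h
    apply hi
    have h' : A.mulVec i.1 - j.1 ∉ Λ := fun hm => h (Finset.mem_coe.2 hm)
    simp only [hL, hc _ h', mul_zero]
  -- the difference annihilates L
  have hZL : ∀ j : ↥Γ, ∑ᶠ i, Z i * L i j = 0 := by
    intro j
    have h1 : (Function.support fun i => Y i * L i j).Finite :=
      (hcol j).subset (hsuppL Y j)
    have h2 : (Function.support fun i => Y' i * L i j).Finite :=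
      (hcol j).subset (hsuppL Y' j)
    have heq : ∑ᶠ i, Z i * L i j = (∑ᶠ i, Y i * L i j) - ∑ᶠ i, Y' i * L i j := by
      rw [← finsum_sub_distrib h1 h2]
      apply finsum_congr
      intro i
      simp [hZdef, sub_mul]
    have hYj : ∑ᶠ i, Y i * L i j = ∑ᶠ i, Y' i * L i j := congrFun hYY' j
    rw [heq, hYj, sub_self]
  -- key computation
  have key : ∀ x, ∑ᶠ i : ↥Γ, Z i * φ (x + i.1) = 0 := by
    intro x
    have hKc : IsCompact (tsupport φ) := hsupp
    have hJfin : {j : ↥Γ | A.mulVec x + j.1 ∈ tsupport φ}.Finite := by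
      have him : IsCompact ((fun y => y - A.mulVec x) '' tsupport φ) :=
        hKc.image (by fun_prop)
      refine (hΓ.finite_inter_s10 him).subset ?_
      intro j hj
      exact ⟨A.mulVec x + j.1, hj, by simp⟩
    set J : Finset ↥Γ := hJfin.toFinset with hJdef
    set I : Finset ↥Γ := J.biUnion (fun j => (hcol j).toFinset) with hIdef
    -- expansion of a translate of φ
    have hexp : ∀ i : ↥Γ,
        φ (x + i.1) = ∑ j ∈ J, c (A.mulVec i.1 - j.1) * φ (A.mulVec x + j.1) := by
      intro i
      have hmem : ∀ k : {k // k ∈ Λ}, A.mulVec i.1 - k.1 ∈ Γ :=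
        fun k => sub_mem (hA.1 _ i.2) (hΛ k.2)
      set F : ↥Γ → ℂ := fun j => c (A.mulVec i.1 - j.1) * φ (A.mulVec x + j.1) with hF
      set Ti : Finset ↥Γ :=
        Λ.attach.image (fun k => (⟨A.mulVec i.1 - k.1, hmem k⟩ : ↥Γ)) with hTi
      have hsub1 : Function.support F ⊆ ↑Ti := by
        intro j hj
        have hcne : c (A.mulVec i.1 - j.1) ≠ 0 := by
          intro h0; apply hj; rw [hF]; simp [h0]
        have hkΛ : A.mulVec i.1 - j.1 ∈ Λ := by
          by_contra h; exact hcne (hc _ h)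
        have : j = (⟨A.mulVec i.1 - (A.mulVec i.1 - j.1), hmem ⟨_, hkΛ⟩⟩ : ↥Γ) := by
          apply Subtype.ext; simp
        rw [this]
        exact Finset.mem_coe.2 (Finset.mem_image.2 ⟨⟨_, hkΛ⟩, Finset.mem_attach _ _, rfl⟩)
      have hsub2 : Function.support F ⊆ ↑J := by
        intro j hj
        have hφne : φ (A.mulVec x + j.1) ≠ 0 := by
          intro h0; apply hj; rw [hF]; simp [h0]
        have : A.mulVec x + j.1 ∈ tsupport φ := subset_tsupport φ hφne
        simpa [hJdef] using this
      have e1 : ∑ᶠ j, F j = ∑ j ∈ J, F j := finsum_eq_sum_of_support_subset F hsub2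
      have e2 : ∑ᶠ j, F j = ∑ j ∈ Ti, F j := finsum_eq_sum_of_support_subset F hsub1
      have e3 : ∑ j ∈ Ti, F j = ∑ k ∈ Λ.attach, F ⟨A.mulVec i.1 - k.1, hmem k⟩ := by
        rw [hTi]
        apply Finset.sum_image
        intro a _ b _ hab
        have h1 : A.mulVec i.1 - a.1 = A.mulVec i.1 - b.1 := by
          exact congrArg Subtype.val hab
        exact Subtype.ext (sub_right_injective h1)
      have e4 : ∑ k ∈ Λ.attach, F ⟨A.mulVec i.1 - k.1, hmem k⟩
          = ∑ k ∈ Λ, c k * φ (A.mulVec x + A.mulVec i.1 - k) := by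
        rw [← Finset.sum_attach Λ (fun k => c k * φ (A.mulVec x + A.mulVec i.1 - k))]
        apply Finset.sum_congr rfl
        intro k _
        rw [hF]
        simp only [sub_sub_cancel]
        congr 1
        congr 1
        abel
      have e5 : φ (x + i.1) = ∑ k ∈ Λ, c k * φ (A.mulVec x + A.mulVec i.1 - k) := by
        rw [href (x + i.1)]
        apply Finset.sum_congr rfl
        intro k _
        rw [Matrix.mulVec_add]
      rw [e5, ← e4, ← e3, ← e2, e1]
    -- support of the main sum is inside I
    have hsubI : Function.support (fun i : ↥Γ => Z i * φ (x + i.1)) ⊆ ↑I := by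
      intro i hi
      have hφne : φ (x + i.1) ≠ 0 := by
        intro h0; apply hi; simp [h0]
      rw [hexp i] at hφne
      obtain ⟨j, hjJ, hj⟩ := Finset.exists_ne_zero_of_sum_ne_zero hφne
      have h1 : c (A.mulVec i.1 - j.1) ≠ 0 := fun h0 => hj (by rw [h0, zero_mul])
      have h2 : A.mulVec i.1 - j.1 ∈ Λ := by by_contra h; exact h1 (hc _ h)
      rw [hIdef]
      refine Finset.mem_coe.2 (Finset.mem_biUnion.2 ⟨j, hjJ, ?_⟩)
      simpa using h2
    calc ∑ᶠ i : ↥Γ, Z i * φ (x + i.1)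
        = ∑ i ∈ I, Z i * φ (x + i.1) := finsum_eq_sum_of_support_subset _ hsubI
      _ = ∑ i ∈ I, ∑ j ∈ J, Z i * (c (A.mulVec i.1 - j.1) * φ (A.mulVec x + j.1)) := by
          apply Finset.sum_congr rfl
          intro i _
          rw [hexp i, Finset.mul_sum]
      _ = ∑ j ∈ J, (∑ i ∈ I, Z i * L i j) * φ (A.mulVec x + j.1) := by
          rw [Finset.sum_comm]
          apply Finset.sum_congr rfl
          intro j _
          rw [Finset.sum_mul]
          apply Finset.sum_congr rfl
          intro i _
          rw [hL]
          ring
      _ = ∑ j ∈ J, (∑ᶠ i, Z i * L i j) * φ (A.mulVec x + j.1) := by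
          apply Finset.sum_congr rfl
          intro j hjJ
          congr 1
          refine (finsum_eq_sum_of_support_subset _ ?_).symm
          refine (hsuppL Z j).trans ?_
          intro i hi
          rw [hIdef]
          exact Finset.mem_coe.2 (Finset.mem_biUnion.2 ⟨j, hjJ, by simpa using hi⟩)
      _ = 0 := by
          apply Finset.sum_eq_zero
          intro j _
          rw [hZL j, zero_mul]
  -- conclude via linear independence
  have hα : (fun k : ↥Γ => Z (-k)) = 0 := by
    apply hind
    intro x
    have hcomp : ∑ᶠ i : ↥Γ, (fun k : ↥Γ => Z (-k) * φ (x - k.1)) ((Equiv.neg ↥Γ) i)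
        = ∑ᶠ k : ↥Γ, Z (-k) * φ (x - k.1) :=
      finsum_comp_equiv (Equiv.neg ↥Γ) (f := fun k : ↥Γ => Z (-k) * φ (x - k.1))
    rw [← hcomp]
    have : ∀ i : ↥Γ, (fun k : ↥Γ => Z (-k) * φ (x - k.1)) ((Equiv.neg ↥Γ) i)
        = Z i * φ (x + i.1) := by
      intro i
      simp [Equiv.neg_apply, sub_neg_eq_add]
    rw [finsum_congr this, key x]
  have hZ0 : Z = 0 := by
    funext i
    have := congrFun hα (-i)
    simpa using this
  have : Y - Y' = 0 := hZ0
  exact sub_eq_zero.mp this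
end

section
/- Let A be a d×d dilation matrix (all eigenvalues of modulus > 1) and V ⊆ R^d a bounded set with 0 in its interior and V ⊆ AV. Set C = AV \ V. Then the sets {A^j C}_{j∈Z} are pairwise disjoint and their union is R^d \ {0}. -/
/-- Integer powers of a matrix (negative powers via the inverse matrix). -/
noncomputable def zMatPow {d : ℕ} (A : Matrix (Fin d) (Fin d) ℝ) (j : ℤ) :
    Matrix (Fin d) (Fin d) ℝ :=
  if 0 ≤ j then A ^ j.toNat else A⁻¹ ^ (-j).toNat

open Filter Topology Set
open scoped ENNReal NNReal

attribute [local instance] Matrix.linftyOpNormedAddCommGroup Matrix.linftyOpNormedRing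
  Matrix.linftyOpNormedAlgebra

lemma norm_pow_tendsto (d : ℕ) (B : Matrix (Fin d) (Fin d) ℂ) (h : spectralRadius ℂ B < 1) :
    Tendsto (fun n : ℕ => ‖B ^ n‖) atTop (𝓝 0) := by
  haveI : CompleteSpace (Matrix (Fin d) (Fin d) ℂ) := FiniteDimensional.complete ℂ _
  obtain ⟨r, hr1, hr2⟩ := ENNReal.lt_iff_exists_nnreal_btwn.mp h
  have hr2' : (r : ℝ) < 1 := by exact_mod_cast hr2
  have hge := spectrum.pow_nnnorm_pow_one_div_tendsto_nhds_spectralRadius B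
  have hev : ∀ᶠ n : ℕ in atTop, (‖B ^ n‖₊ : ℝ≥0∞) ^ (1/(n:ℝ)) < r :=
    hge.eventually_lt_const hr1
  have hle : ∀ᶠ n : ℕ in atTop, ‖B ^ n‖ ≤ (r:ℝ) ^ n := by
    filter_upwards [hev, eventually_ge_atTop 1] with n hn hn1
    have hn0 : (n:ℝ) ≠ 0 := by positivity
    have : (‖B ^ n‖₊ : ℝ≥0∞) ≤ (r : ℝ≥0∞) ^ (n:ℝ) := by
      calc (‖B ^ n‖₊ : ℝ≥0∞) = ((‖B ^ n‖₊ : ℝ≥0∞) ^ (1/(n:ℝ))) ^ (n:ℝ) := by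
            rw [← ENNReal.rpow_mul, one_div, inv_mul_cancel₀ hn0, ENNReal.rpow_one]
        _ ≤ (r : ℝ≥0∞) ^ (n:ℝ) := ENNReal.rpow_le_rpow hn.le (by positivity)
    rw [ENNReal.rpow_natCast, ← ENNReal.coe_pow, ENNReal.coe_le_coe] at this
    calc ‖B ^ n‖ = ((‖B ^ n‖₊ : ℝ≥0) : ℝ) := rfl
      _ ≤ ((r ^ n : ℝ≥0) : ℝ) := by exact_mod_cast this
      _ = (r:ℝ) ^ n := by push_cast; ring
  have hgeo : Tendsto (fun n : ℕ => (r:ℝ) ^ n) atTop (𝓝 0) :=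
    tendsto_pow_atTop_nhds_zero_of_lt_one r.coe_nonneg hr2'
  exact squeeze_zero' (Eventually.of_forall fun n => norm_nonneg _) hle hgeo


lemma mulVec_map (d : ℕ) (M : Matrix (Fin d) (Fin d) ℝ) (x : Fin d → ℝ) :
    (M.map (Complex.ofReal ·)).mulVec (fun i => (x i : ℂ)) = fun i => ((M.mulVec x) i : ℂ) := by
  funext i
  simp [Matrix.mulVec, dotProduct, Matrix.map_apply]

lemma norm_complexify (d : ℕ) (y : Fin d → ℝ) : ‖(fun i => (y i : ℂ))‖ = ‖y‖ := by
  simp only [Pi.norm_def, Pi.nnnorm_def]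
  congr 1
  apply Finset.sup_congr rfl
  intro i _
  simp [Complex.nnnorm_real]

lemma contract (d : ℕ) (A : Matrix (Fin d) (Fin d) ℝ)
    (hA : ∀ μ ∈ spectrum ℂ (A.map (Complex.ofReal ·)), 1 < ‖μ‖) :
    IsUnit A ∧ ∃ c : ℕ → ℝ, Tendsto c atTop (𝓝 0) ∧ (∀ n, 0 ≤ c n) ∧
      ∀ (n : ℕ) (x : Fin d → ℝ), ‖(A⁻¹ ^ n).mulVec x‖ ≤ c n * ‖x‖ := by
  set B := A.map (Complex.ofReal ·) with hB
  have hBunit : IsUnit B := by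
    refine spectrum.isUnit_of_zero_notMem ℂ fun h0 => ?_
    have := hA 0 h0
    norm_num at this
  have hAunit : IsUnit A := by
    rw [Matrix.isUnit_iff_isUnit_det]
    have h1 : IsUnit B.det := (Matrix.isUnit_iff_isUnit_det B).mp hBunit
    have h2 : B.det = Complex.ofReal A.det := (RingHom.map_det Complex.ofRealHom A).symm
    rw [h2, isUnit_iff_ne_zero, ne_eq, Complex.ofReal_eq_zero] at h1
    exact isUnit_iff_ne_zero.mpr h1
  -- units
  set u := hAunit.unit with hu
  set F : Matrix (Fin d) (Fin d) ℝ →+* Matrix (Fin d) (Fin d) ℂ := Complex.ofRealHom.mapMatrix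
  have hFA : F A = B := rfl
  set uc : (Matrix (Fin d) (Fin d) ℂ)ˣ := Units.map F.toMonoidHom u with huc
  have hucval : (uc : Matrix (Fin d) (Fin d) ℂ) = B := by
    simp [huc, hu, hFA]
  have hAinv : (↑u⁻¹ : Matrix (Fin d) (Fin d) ℝ) = A⁻¹ := by
    rw [Matrix.coe_units_inv, IsUnit.unit_spec]
  have hBinv : (↑uc⁻¹ : Matrix (Fin d) (Fin d) ℂ) = B⁻¹ := by
    rw [Matrix.coe_units_inv, hucval]
  have hFAinv : F A⁻¹ = B⁻¹ := by
    rw [← hAinv, ← hBinv, huc, Units.coe_map_inv]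
    rfl
  -- spectrum of B⁻¹
  have hspec : ∀ μ ∈ spectrum ℂ B⁻¹, ‖μ‖₊ < 1 := by
    intro μ hμ
    rw [← hBinv, ← spectrum.map_inv, Set.mem_inv, hucval] at hμ
    have h := hA _ hμ
    rw [norm_inv] at h
    have hpos : ‖μ‖ < 1 := by
      by_contra hcon
      push_neg at hcon
      have : ‖μ‖⁻¹ ≤ 1 := inv_le_one_of_one_le₀ hcon
      linarith
    have hn : ‖μ‖ < 1 := by exact hpos
    exact_mod_cast hn
  have hrad : spectralRadius ℂ B⁻¹ < 1 := by
    rcases isEmpty_or_nonempty (Fin d) with hd | hd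
    · haveI : Subsingleton (Matrix (Fin d) (Fin d) ℂ) :=
        ⟨fun M N => by ext i j; exact hd.elim i⟩
      rw [spectrum.SpectralRadius.of_subsingleton]
      exact zero_lt_one
    · haveI : Nontrivial (Matrix (Fin d) (Fin d) ℂ) := by
        obtain ⟨i⟩ := hd
        refine ⟨0, 1, fun hc => ?_⟩
        have := congrFun (congrFun hc i) i
        simp [Matrix.one_apply_eq] at this
      have := spectrum.spectralRadius_lt_of_forall_lt (B⁻¹) (r := 1) hspec
      simpa using this
  have hten := norm_pow_tendsto d B⁻¹ hrad
  refine ⟨hAunit, fun n => ‖B⁻¹ ^ n‖, hten, fun n => norm_nonneg _, ?_⟩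
  intro n x
  have hmap : (A⁻¹ ^ n).map (Complex.ofReal ·) = B⁻¹ ^ n := by
    have : F (A⁻¹ ^ n) = (F A⁻¹) ^ n := map_pow F _ n
    rw [hFAinv] at this
    exact this
  have key : (B⁻¹ ^ n).mulVec (fun i => (x i : ℂ)) = fun i => (((A⁻¹ ^ n).mulVec x) i : ℂ) := by
    rw [← hmap]; exact mulVec_map d _ x
  calc ‖(A⁻¹ ^ n).mulVec x‖ = ‖(B⁻¹ ^ n).mulVec (fun i => (x i : ℂ))‖ := by
        rw [key, norm_complexify]
    _ ≤ ‖B⁻¹ ^ n‖ * ‖(fun i => (x i : ℂ))‖ := Matrix.linfty_opNorm_mulVec _ _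
    _ = ‖B⁻¹ ^ n‖ * ‖x‖ := by rw [norm_complexify]


lemma zMatPow_eq {d : ℕ} {A : Matrix (Fin d) (Fin d) ℝ} (hA : IsUnit A) (j : ℤ) :
    zMatPow A j = ↑(hA.unit ^ j) := by
  unfold zMatPow
  split
  case isTrue h =>
    conv_rhs => rw [← Int.toNat_of_nonneg h]
    rw [zpow_natCast, Units.val_pow_eq_pow_val, hA.unit_spec]
  case isFalse h =>
    have h2 : (0:ℤ) ≤ -j := by omega
    have hj : hA.unit ^ j = (hA.unit ^ (-j).toNat)⁻¹ := by
      conv_lhs => rw [show j = -(-j) by ring, ← Int.toNat_of_nonneg h2]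
      rw [zpow_neg, zpow_natCast]
    rw [hj, ← inv_pow, Units.val_pow_eq_pow_val]
    congr 1
    rw [Matrix.coe_units_inv, hA.unit_spec]

lemma zMatPow_neg_nat {d : ℕ} {A : Matrix (Fin d) (Fin d) ℝ} (hA : IsUnit A) (n : ℕ) :
    zMatPow A (-(n:ℤ)) = A⁻¹ ^ n := by
  rw [zMatPow_eq hA, zpow_neg, zpow_natCast, ← inv_pow, Units.val_pow_eq_pow_val,
    Matrix.coe_units_inv, hA.unit_spec]

/-- for a dilation matrix `A` and a bounded set `V` with
`0 ∈ V°` and `V ⊆ AV`, the sets `A^j C`, `C = AV \ V`, are pairwise disjoint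
and their union is `ℝ^d \ {0}`. -/
theorem dilation_annuli_partition (d : ℕ) (A : Matrix (Fin d) (Fin d) ℝ)
    (hA : ∀ μ ∈ spectrum ℂ (A.map (Complex.ofReal ·)), 1 < ‖μ‖)
    (V : Set (Fin d → ℝ)) (hVb : Bornology.IsBounded V)
    (hV0 : (0 : Fin d → ℝ) ∈ interior V)
    (hVA : V ⊆ (fun x => A.mulVec x) '' V)
    (C : Set (Fin d → ℝ)) (hC : C = ((fun x => A.mulVec x) '' V) \ V) :
    (∀ i j : ℤ, i ≠ j →
      Disjoint ((fun x => (zMatPow A i).mulVec x) '' C)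
        ((fun x => (zMatPow A j).mulVec x) '' C)) ∧
    (⋃ j : ℤ, (fun x => (zMatPow A j).mulVec x) '' C) = Set.univ \ {0} := by
  classical
  obtain ⟨hAunit, c, hc, hc0, hbound⟩ := contract d A hA
  set f : ℤ → (Fin d → ℝ) → (Fin d → ℝ) := fun j => (zMatPow A j).mulVec with hfdef
  have hfi : ∀ (i : ℤ) (s : Set (Fin d → ℝ)),
      (fun x => (zMatPow A i).mulVec x) '' s = f i '' s := fun _ _ => rfl
  have hcomp : ∀ (i j : ℤ) (x : Fin d → ℝ), f i (f j x) = f (i + j) x := by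
    intro i j x
    show (zMatPow A i).mulVec ((zMatPow A j).mulVec x) = (zMatPow A (i+j)).mulVec x
    rw [Matrix.mulVec_mulVec, zMatPow_eq hAunit, zMatPow_eq hAunit, zMatPow_eq hAunit,
      ← Units.val_mul, ← zpow_add]
  have hf0 : ∀ x, f 0 x = x := by
    intro x
    show (zMatPow A 0).mulVec x = x
    simp [zMatPow, Matrix.one_mulVec]
  have hinj : ∀ j, Function.Injective (f j) := by
    intro j x y h
    have h2 := congrArg (f (-j)) h
    rwa [hcomp, hcomp, neg_add_cancel, hf0, hf0] at h2
  have hfzero : ∀ j, f j (0 : Fin d → ℝ) = 0 := fun j => Matrix.mulVec_zero _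
  set W : ℤ → Set (Fin d → ℝ) := fun j => f j '' V with hWdef
  have hf1 : ∀ x, f 1 x = A.mulVec x := by
    intro x
    show (zMatPow A 1).mulVec x = A.mulVec x
    norm_num [zMatPow]
  have hfn : ∀ (n : ℕ) (x : Fin d → ℝ), f (-(n:ℤ)) x = (A⁻¹ ^ n).mulVec x := by
    intro n x
    show (zMatPow A (-(n:ℤ))).mulVec x = _
    rw [zMatPow_neg_nat hAunit]
  have hstep : ∀ j : ℤ, W j ⊆ W (j+1) := by
    rintro j _ ⟨v, hv, rfl⟩
    obtain ⟨w, hw, hwv⟩ := hVA hv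
    exact ⟨w, hw, by rw [← hcomp j 1 w, hf1]; exact congrArg (f j) hwv⟩
  have hmono : Monotone W := monotone_int_of_le_succ hstep
  have hCim : ∀ j : ℤ, f j '' C = W (j+1) \ W j := by
    intro j
    rw [hC, Set.image_diff (hinj j)]
    congr 1
    rw [← Set.image_comp]
    have hcc : (f j ∘ fun x => A.mulVec x) = f (j+1) := by
      funext x
      simp only [Function.comp_apply]
      rw [← hf1, hcomp]
    rw [hcc]
  have h0V : (0 : Fin d → ℝ) ∈ V := interior_subset hV0
  have hdisj : ∀ i j : ℤ, i < j → Disjoint (f i '' C) (f j '' C) := by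
    intro i j hij
    rw [Set.disjoint_left]
    intro x hxi hxj
    have h1 : x ∈ W j :=
      hmono (by omega : i + 1 ≤ j) ((hCim i ▸ hxi : x ∈ W (i+1) \ W i).1)
    exact (hCim j ▸ hxj : x ∈ W (j+1) \ W j).2 h1
  constructor
  · intro i j hij
    rw [hfi, hfi]
    rcases lt_or_gt_of_ne hij with h | h
    · exact hdisj i j h
    · exact (hdisj j i h).symm
  · apply Set.eq_of_subset_of_subset
    · intro x hx
      rw [Set.mem_iUnion] at hx
      obtain ⟨j, hxs⟩ := hx
      rw [hfi] at hxs
      obtain ⟨y, hyC, rfl⟩ := hxs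
      simp only [Set.mem_diff, Set.mem_univ, Set.mem_singleton_iff, true_and]
      intro h0
      have hy0 : y = 0 := hinj j (h0.trans (hfzero j).symm)
      rw [hC] at hyC
      exact hyC.2 (hy0 ▸ h0V)
    · intro x hx
      have hx0 : x ≠ 0 := by
        simp only [Set.mem_diff, Set.mem_univ, Set.mem_singleton_iff, true_and] at hx
        exact hx
      obtain ⟨ε, hε, hball⟩ := Metric.mem_nhds_iff.mp (mem_interior_iff_mem_nhds.mp hV0)
      have hcx : Filter.Tendsto (fun n : ℕ => c n * ‖x‖) Filter.atTop (𝓝 0) := by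
        simpa using hc.mul_const ‖x‖
      obtain ⟨n₁, hn₁⟩ := (hcx.eventually_lt_const hε).exists
      have hmem : f (-(n₁:ℤ)) x ∈ V := by
        apply hball
        rw [Metric.mem_ball, dist_zero_right, hfn]
        exact lt_of_le_of_lt (hbound n₁ x) hn₁
      have hxN : x ∈ W (n₁ : ℤ) :=
        ⟨f (-(n₁:ℤ)) x, hmem, by rw [hcomp, add_neg_cancel, hf0]⟩
      obtain ⟨R, hR⟩ := hVb.subset_closedBall 0
      have hxpos : 0 < ‖x‖ := norm_pos_iff.mpr hx0
      have hcR : Filter.Tendsto (fun n : ℕ => c n * R) Filter.atTop (𝓝 0) := by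
        simpa using hc.mul_const R
      obtain ⟨n₂, hn₂⟩ := (hcR.eventually_lt_const hxpos).exists
      have hxM : x ∉ W (-(n₂:ℤ)) := by
        rintro ⟨v, hv, rfl⟩
        have h1 : ‖f (-(n₂:ℤ)) v‖ ≤ c n₂ * ‖v‖ := by
          rw [hfn]; exact hbound n₂ v
        have h2 : ‖v‖ ≤ R := by
          have := hR hv
          rwa [Metric.mem_closedBall, dist_zero_right] at this
        have h3 : ‖f (-(n₂:ℤ)) v‖ ≤ c n₂ * R :=
          h1.trans (mul_le_mul_of_nonneg_left h2 (hc0 n₂))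
        exact absurd (lt_of_le_of_lt h3 hn₂) (lt_irrefl _)
      set M : ℤ := -(n₂:ℤ) with hMdef
      set N : ℤ := (n₁:ℤ) with hNdef
      have hMN : M < N := by
        by_contra hcon
        push_neg at hcon
        exact hxM (hmono hcon hxN)
      have hPex : ∃ k : ℕ, x ∈ W (M + k) :=
        ⟨(N - M).toNat, by rw [show M + ((N-M).toNat : ℤ) = N by omega]; exact hxN⟩
      set k₀ := Nat.find hPex with hk₀def
      have hk₀ : x ∈ W (M + k₀) := Nat.find_spec hPex
      have hk₀0 : k₀ ≠ 0 := by
        intro h0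
        apply hxM
        rw [h0] at hk₀
        simpa using hk₀
      obtain ⟨k, hk⟩ := Nat.exists_eq_succ_of_ne_zero hk₀0
      have hnk : x ∉ W (M + k) := Nat.find_min hPex (by omega)
      rw [Set.mem_iUnion]
      refine ⟨M + k, ?_⟩
      rw [hfi, hCim]
      refine ⟨?_, hnk⟩
      rw [show M + (k:ℤ) + 1 = M + (k₀:ℤ) by omega]
      exact hk₀
end

section
/- Let φ: R^d → C be a compactly supported refinable function φ(x) = Σ_{k∈Λ} c_kφ(Ax−k) with linearly independent Γ-translates, having accuracy κ (every polynomial of degree < κ lies in S(φ)). Let Ω ⊆ Γ be a finite Λ-admissible set such that the restriction map properties of Proposition on spectra hold, and T = [c_{Ai−j}]_{i,j∈Ω}. If λ_1,…,λ_d are the eigenvalues of A and η = (1/λ_1,…,1/λ_d), then for every 0 ≤ s ≤ κ−1 and every multi-index α with |α| = s, the product η^α = λ_1^{-α_1}···λ_d^{-α_d} is an eigenvalue of T. -/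
open scoped BigOperators
open Polynomial

open Matrix

lemma eval_charpoly'' {n R : Type*} [Fintype n] [DecidableEq n] [CommRing R]
    (M : Matrix n n R) (t : R) :
    M.charpoly.eval t = (Matrix.scalar n t - M).det := by
  rw [Matrix.charpoly, ← Polynomial.coe_evalRingHom, RingHom.map_det]
  congr 1
  ext i j
  simp [Matrix.charmatrix_apply, Matrix.scalar_apply, Matrix.diagonal_apply, Matrix.map_apply,
    apply_ite (Polynomial.eval t)]

lemma exists_point_forms {d : ℕ} (w : Fin d → (Fin d → ℂ)) (hw : ∀ i, w i ≠ 0) :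
    ∃ x : Fin d → ℝ, ∀ i, (∑ j, w i j * (x j : ℂ)) ≠ 0 := by
  classical
  suffices h : ∀ s : Finset (Fin d), ∃ x : Fin d → ℝ, ∀ i ∈ s, (∑ j, w i j * (x j : ℂ)) ≠ 0 by
    obtain ⟨x, hx⟩ := h Finset.univ
    exact ⟨x, fun i => hx i (Finset.mem_univ i)⟩
  intro s
  induction s using Finset.induction_on with
  | empty => exact ⟨0, by simp⟩
  | @insert a s ha ih =>
    obtain ⟨x, hx⟩ := ih
    obtain ⟨j₀, hj₀⟩ : ∃ j₀, w a j₀ ≠ 0 := Function.ne_iff.mp (hw a)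
    set y : Fin d → ℝ := Pi.single j₀ 1 with hy
    have hLy : ∀ i, (∑ j, w i j * (y j : ℂ)) = w i j₀ := by
      intro i
      rw [Finset.sum_eq_single j₀]
      · simp [hy]
      · intro b _ hb; simp [hy, Pi.single_apply, hb]
      · simp
    have hbadfin : ∀ i ∈ insert a s,
        ({t : ℝ | (∑ j, w i j * (x j : ℂ)) + (t : ℂ) * (∑ j, w i j * (y j : ℂ)) = 0}).Finite := by
      intro i hi
      by_cases hLyi : (∑ j, w i j * (y j : ℂ)) = 0
      · have hia : i ∈ s := by
          rcases Finset.mem_insert.mp hi with h | h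
          · exfalso; rw [h] at hLyi; rw [hLy] at hLyi; exact hj₀ hLyi
          · exact h
        convert Set.finite_empty
        ext t; simp only [Set.mem_setOf_eq, hLyi, mul_zero, add_zero, Set.mem_empty_iff_false,
          iff_false]
        exact hx i hia
      · apply Set.Subsingleton.finite
        intro t₁ h₁ t₂ h₂
        simp only [Set.mem_setOf_eq] at h₁ h₂
        have : ((t₁ : ℂ) - t₂) * (∑ j, w i j * (y j : ℂ)) = 0 := by
          rw [sub_mul]; linear_combination h₁ - h₂
        rcases mul_eq_zero.mp this with h | h
        · exact_mod_cast sub_eq_zero.mp (by exact_mod_cast h)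
        · exact absurd h hLyi
    have hfin : (⋃ i ∈ insert a s,
        {t : ℝ | (∑ j, w i j * (x j : ℂ)) + (t : ℂ) * (∑ j, w i j * (y j : ℂ)) = 0}).Finite :=
      Set.Finite.biUnion (Finset.finite_toSet _) hbadfin
    obtain ⟨t, ht⟩ := (Set.Finite.infinite_compl hfin).nonempty
    refine ⟨x + t • y, ?_⟩
    intro i hi
    have hsum : (∑ j, w i j * (((x + t • y) j : ℝ) : ℂ))
        = (∑ j, w i j * (x j : ℂ)) + (t : ℂ) * (∑ j, w i j * (y j : ℂ)) := by
      rw [Finset.mul_sum, ← Finset.sum_add_distrib]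
      congr 1; ext j
      simp only [Pi.add_apply, Pi.smul_apply, smul_eq_mul]
      push_cast
      ring
    rw [hsum]
    intro h0
    exact ht (Set.mem_biUnion hi h0)

/-- if `φ` has accuracy `κ` and linearly independent `Γ`-translates,
and `η = (1/λ_1, …, 1/λ_d)` for the eigenvalues `λ_i` of `A`, then `η^α` is an
eigenvalue of `T = [c_{Ai−j}]_{i,j∈Ω}` for every multi-index `α` with `|α| < κ`. -/
theorem accuracy_gives_eigenvalues (d : ℕ) (Γ : AddSubgroup (Fin d → ℝ))
    (A : Matrix (Fin d) (Fin d) ℝ) (Λ : Finset (Fin d → ℝ)) (c : (Fin d → ℝ) → ℂ)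
    (φ : (Fin d → ℝ) → ℂ) (κ : ℕ)
    (hΓ : IsLattice Γ) (hA : IsDilation A Γ)
    (hΛ : (Λ : Set (Fin d → ℝ)) ⊆ (Γ : Set (Fin d → ℝ)))
    (hc : ∀ k, k ∉ Λ → c k = 0)
    (hsupp : HasCompactSupport φ)
    (href : ∀ x, φ x = ∑ k ∈ Λ, c k * φ (A.mulVec x - k))
    (hind : ∀ α : ↥Γ → ℂ, (∀ x, ∑ᶠ k : ↥Γ, α k * φ (x - k.1) = 0) → α = 0)
    (hacc : ∀ p : MvPolynomial (Fin d) ℂ, p.totalDegree < κ →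
      ∃ y : ↥Γ → ℂ, ∀ x : Fin d → ℝ,
        MvPolynomial.eval (fun i => (x i : ℂ)) p = ∑ᶠ k : ↥Γ, y k * φ (x + k.1))
    (Ω : ℕ → Finset ↥Γ)
    (hadm : ∀ n, ∀ i : ↥Γ, (∃ w ∈ Ω n, ∃ l ∈ Λ, A.mulVec i.1 = w.1 + l) → i ∈ Ω n)
    (hmono : ∀ n, Ω n ⊂ Ω (n + 1))
    (hunion : (⋃ n, (Ω n : Set ↥Γ)) = Set.univ)
    (hstep : ∀ n, ∀ i : ↥Γ, (∃ w ∈ Ω (n + 1), ∃ l ∈ Λ, A.mulVec i.1 = w.1 + l) → i ∈ Ω n)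
    (n : ℕ)
    (μ : Fin d → ℂ)
    (hμ : (A.map (Complex.ofReal ·)).charpoly = ∏ i, (X - C (μ i))) :
    ∀ α : Fin d → ℕ, (∑ i, α i) < κ →
      (∏ i, (μ i)⁻¹ ^ α i) ∈
        spectrum ℂ (Matrix.of fun i j : {x // x ∈ Ω n} =>
          c (A.mulVec i.1.1 - j.1.1)) := by
  intro α hα
  classical
  obtain ⟨hAΓ, habs⟩ := hA
  -- ## Spectral preliminaries
  have hdet0 : ∀ i, (Matrix.scalar (Fin d) (μ i) - A.map (Complex.ofReal ·)).det = 0 := by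
    intro i
    rw [← eval_charpoly'', hμ, Polynomial.eval_prod]
    exact Finset.prod_eq_zero (Finset.mem_univ i) (by simp)
  have hspec : ∀ i, μ i ∈ spectrum ℂ (A.map (Complex.ofReal ·)) := by
    intro i
    rw [spectrum.mem_iff]
    intro hu
    rw [Matrix.isUnit_iff_isUnit_det] at hu
    rw [isUnit_iff_ne_zero] at hu
    apply hu
    rw [← hdet0 i]
    congr 1
  have hμ0 : ∀ i, μ i ≠ 0 := by
    intro i h
    have := habs _ (hspec i)
    rw [h] at this
    simp only [norm_zero] at this
    exact absurd this (by norm_num)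
  have hdetB : (A.map (Complex.ofReal ·)).det = ∏ i, μ i := by
    have h0 := congrArg (Polynomial.eval (0:ℂ)) hμ
    rw [eval_charpoly'', Polynomial.eval_prod] at h0
    simp only [Polynomial.eval_sub, Polynomial.eval_X, Polynomial.eval_C, zero_sub] at h0
    have hL : (Matrix.scalar (Fin d) (0:ℂ) - A.map (Complex.ofReal ·)).det
        = (-1)^d * (A.map (Complex.ofReal ·)).det := by
      rw [map_zero, zero_sub, Matrix.det_neg]
      simp
    have hR : (∏ i : Fin d, -μ i) = (-1)^d * ∏ i, μ i := by
      rw [show (fun i : Fin d => -μ i) = fun i => (-1) * μ i from funext fun i => by ring]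
      rw [Finset.prod_mul_distrib]
      simp
    rw [hL, hR] at h0
    exact mul_left_cancel₀ (pow_ne_zero d (neg_ne_zero.mpr one_ne_zero)) h0
  have hdetA : IsUnit A.det := by
    rw [isUnit_iff_ne_zero]
    intro h
    have : ((A.det : ℝ) : ℂ) = (A.map (Complex.ofReal ·)).det :=
      RingHom.map_det Complex.ofRealHom A
    rw [h, hdetB] at this
    exact (Finset.prod_ne_zero_iff.mpr fun i _ => hμ0 i) (by exact_mod_cast this.symm)
  have hAAinv : ∀ u : Fin d → ℝ, A *ᵥ (A⁻¹ *ᵥ u) = u := by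
    intro u
    rw [Matrix.mulVec_mulVec, Matrix.mul_nonsing_inv _ hdetA, Matrix.one_mulVec]
  -- ## Left eigenvectors
  have hW : ∀ i : Fin d, ∃ w : Fin d → ℂ, w ≠ 0 ∧
      (A.map (Complex.ofReal ·))ᵀ *ᵥ w = μ i • w := by
    intro i
    have hdet : ((A.map (Complex.ofReal ·))ᵀ - Matrix.scalar (Fin d) (μ i)).det = 0 := by
      have : (A.map (Complex.ofReal ·))ᵀ - Matrix.scalar (Fin d) (μ i)
          = (-(Matrix.scalar (Fin d) (μ i) - A.map (Complex.ofReal ·)))ᵀ := by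
        rw [Matrix.transpose_neg, Matrix.transpose_sub]
        simp [Matrix.scalar_apply, Matrix.diagonal_transpose, neg_sub]
      rw [this, Matrix.det_transpose, Matrix.det_neg, hdet0 i, mul_zero]
    obtain ⟨v, hv0, hv⟩ := (Matrix.exists_mulVec_eq_zero_iff).mpr hdet
    refine ⟨v, hv0, ?_⟩
    rw [Matrix.sub_mulVec] at hv
    have := sub_eq_zero.mp hv
    rw [this]
    ext j
    simp [Matrix.scalar_apply, Matrix.mulVec_diagonal, mul_comm]
  choose w hw0 hwB using hW
  -- ## The linear forms and their transformation law
  have hLB : ∀ (i : Fin d) (x : Fin d → ℝ),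
      (∑ j, w i j * (((A *ᵥ x) j : ℝ) : ℂ)) = μ i * ∑ j, w i j * ((x j : ℝ) : ℂ) := by
    intro i x
    have hc1 : (fun j => (((A *ᵥ x) j : ℝ) : ℂ))
        = (A.map (Complex.ofReal ·)) *ᵥ (fun j => ((x j : ℝ) : ℂ)) := by
      funext j
      simp only [Matrix.mulVec, dotProduct, Matrix.map_apply]
      push_cast
      rfl
    calc (∑ j, w i j * (((A *ᵥ x) j : ℝ) : ℂ))
        = w i ⬝ᵥ ((A.map (Complex.ofReal ·)) *ᵥ (fun j => ((x j : ℝ) : ℂ))) := by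
          rw [← hc1]; rfl
      _ = ((A.map (Complex.ofReal ·))ᵀ *ᵥ w i) ⬝ᵥ (fun j => ((x j : ℝ) : ℂ)) := by
          rw [Matrix.dotProduct_mulVec, Matrix.mulVec_transpose]
      _ = (μ i • w i) ⬝ᵥ (fun j => ((x j : ℝ) : ℂ)) := by rw [hwB]
      _ = μ i * ∑ j, w i j * ((x j : ℝ) : ℂ) := by
          rw [smul_dotProduct]; rfl
  -- ## The polynomial p
  set p : MvPolynomial (Fin d) ℂ :=
    ∏ i, (∑ j, MvPolynomial.C (w i j) * MvPolynomial.X j) ^ α i with hp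
  have hevalp : ∀ v : Fin d → ℂ,
      MvPolynomial.eval v p = ∏ i, (∑ j, w i j * v j) ^ α i := by
    intro v
    rw [hp]
    simp [MvPolynomial.eval_prod]
  have hdegp : p.totalDegree < κ := by
    have h1 : ∀ i : Fin d, (∑ j, MvPolynomial.C (w i j) * MvPolynomial.X j :
        MvPolynomial (Fin d) ℂ).totalDegree ≤ 1 := by
      intro i
      refine le_trans (MvPolynomial.totalDegree_finset_sum _ _) ?_
      apply Finset.sup_le
      intro j _
      rw [← MvPolynomial.smul_eq_C_mul]
      exact le_trans (MvPolynomial.totalDegree_smul_le _ _)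
        (le_of_eq (MvPolynomial.totalDegree_X j))
    calc p.totalDegree ≤ ∑ i, ((∑ j, MvPolynomial.C (w i j) * MvPolynomial.X j :
          MvPolynomial (Fin d) ℂ) ^ α i).totalDegree := by
          rw [hp]; exact MvPolynomial.totalDegree_finset_prod _ _
      _ ≤ ∑ i, α i := by
          apply Finset.sum_le_sum
          intro i _
          refine le_trans (MvPolynomial.totalDegree_pow _ _) ?_
          calc α i * (∑ j, MvPolynomial.C (w i j) * MvPolynomial.X j :
              MvPolynomial (Fin d) ℂ).totalDegree ≤ α i * 1 :=
              Nat.mul_le_mul_left _ (h1 i)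
            _ = α i := mul_one _
      _ < κ := hα
  obtain ⟨y, hy⟩ := hacc p hdegp
  -- ## θ
  set θ : ℂ := ∏ i, (μ i)⁻¹ ^ α i with hθ
  have hθprod : θ * ∏ i, (μ i) ^ α i = 1 := by
    rw [hθ, ← Finset.prod_mul_distrib]
    apply Finset.prod_eq_one
    intro i _
    rw [← mul_pow, inv_mul_cancel₀ (hμ0 i), one_pow]
  have hθ0 : θ ≠ 0 := by
    intro h
    rw [h, zero_mul] at hθprod
    exact zero_ne_one hθprod
  have hkey : ∀ u : Fin d → ℝ,
      MvPolynomial.eval (fun j => (((A⁻¹ *ᵥ u) j : ℝ) : ℂ)) p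
        = θ * MvPolynomial.eval (fun j => ((u j : ℝ) : ℂ)) p := by
    intro u
    have h1 : MvPolynomial.eval (fun j => (((A *ᵥ (A⁻¹ *ᵥ u)) j : ℝ) : ℂ)) p
        = (∏ i, (μ i) ^ α i) * MvPolynomial.eval (fun j => (((A⁻¹ *ᵥ u) j : ℝ) : ℂ)) p := by
      rw [hevalp, hevalp, ← Finset.prod_mul_distrib]
      apply Finset.prod_congr rfl
      intro i _
      rw [hLB i, mul_pow]
    rw [hAAinv u] at h1
    rw [h1, ← mul_assoc, hθprod, one_mul]
  -- ## Lattice discreteness: bounded sets contain finitely many lattice points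
  have hbd : ∀ s : Set (Fin d → ℝ), Bornology.IsBounded s → {γ : ↥Γ | ↑γ ∈ s}.Finite := by
    obtain ⟨b, hb⟩ := hΓ
    have hset : (Γ : Set (Fin d → ℝ))
        = ((Submodule.span ℤ (Set.range ⇑b)) : Set (Fin d → ℝ)) := by
      rw [hb, ← Submodule.span_int_eq_addSubgroupClosure]
      rfl
    intro s hs
    have hfin1 : (s ∩ (Γ : Set (Fin d → ℝ))).Finite := by
      rw [hset]
      haveI : DiscreteTopology (Submodule.span ℤ (Set.range ⇑b)) := by infer_instance
      haveI : DiscreteTopology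
          ((Submodule.span ℤ (Set.range ⇑b)).toAddSubgroup : Set (Fin d → ℝ)) := by
        exact this
      have hclosed : IsClosed
          (((Submodule.span ℤ (Set.range ⇑b)).toAddSubgroup : AddSubgroup (Fin d → ℝ)) :
            Set (Fin d → ℝ)) :=
        AddSubgroup.isClosed_of_discrete
      exact Metric.finite_isBounded_inter_isClosed DiscreteTopology.isDiscrete hs hclosed
    have : {γ : ↥Γ | ↑γ ∈ s} = (Subtype.val : ↥Γ → (Fin d → ℝ)) ⁻¹'
        (s ∩ (Γ : Set (Fin d → ℝ))) := by
      ext γ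
      simp [γ.2]
    rw [this]
    exact Set.Finite.preimage (Subtype.val_injective.injOn) hfin1
  have hfin : ∀ x : Fin d → ℝ, {γ : ↥Γ | φ (x + ↑γ) ≠ 0}.Finite := by
    intro x
    have hb' : Bornology.IsBounded ((fun v => v - x) '' tsupport φ) :=
      (hsupp.isCompact.image (continuous_id.sub continuous_const)).isBounded
    refine Set.Finite.subset (hbd _ hb') ?_
    intro γ hγ
    exact ⟨x + ↑γ, subset_tsupport φ hγ, add_sub_cancel_left x ↑γ⟩
  have hsupfin : ∀ (a : ↥Γ → ℂ) (x : Fin d → ℝ),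
      (Function.support fun γ : ↥Γ => a γ * φ (x + ↑γ)).Finite := by
    intro a x
    refine Set.Finite.subset (hfin x) ?_
    intro γ hγ
    simp only [Function.mem_support] at hγ
    exact fun h => hγ (by rw [h, mul_zero])
  -- ## Uniqueness of coefficient sequences
  have hU : ∀ a b : ↥Γ → ℂ,
      (∀ u, ∑ᶠ m : ↥Γ, a m * φ (u + ↑m) = ∑ᶠ m : ↥Γ, b m * φ (u + ↑m)) → a = b := by
    intro a b h
    have h0 : (fun γ : ↥Γ => a (-γ) - b (-γ)) = 0 := by
      apply hind
      intro x
      have e1 : ∀ k : ↥Γ, (a (-k) - b (-k)) * φ (x - ↑k)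
          = (fun m : ↥Γ => (a m - b m) * φ (x + ↑m)) (-k) := by
        intro k
        simp only [AddSubgroup.coe_neg]
        rw [sub_eq_add_neg x (↑k : Fin d → ℝ)]
      calc ∑ᶠ k : ↥Γ, (a (-k) - b (-k)) * φ (x - ↑k)
          = ∑ᶠ k : ↥Γ, (fun m : ↥Γ => (a m - b m) * φ (x + ↑m)) (-k) := by
            exact finsum_congr e1
        _ = ∑ᶠ m : ↥Γ, (a m - b m) * φ (x + ↑m) :=
            finsum_comp_equiv (Equiv.neg ↥Γ) (f := fun m : ↥Γ => (a m - b m) * φ (x + ↑m))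
        _ = (∑ᶠ m : ↥Γ, a m * φ (x + ↑m)) - ∑ᶠ m : ↥Γ, b m * φ (x + ↑m) := by
            rw [← finsum_sub_distrib (hsupfin a x) (hsupfin b x)]
            exact finsum_congr fun m => by ring
        _ = 0 := by rw [h x, sub_self]
    funext γ
    have := congrFun h0 (-γ)
    simp only [neg_neg, Pi.zero_apply] at this
    exact sub_eq_zero.mp this
  -- ## Setup: e, ΛG, z
  have hAinvA : ∀ x : Fin d → ℝ, A⁻¹ *ᵥ (A *ᵥ x) = x := by
    intro x
    rw [Matrix.mulVec_mulVec, Matrix.nonsing_inv_mul _ hdetA, Matrix.one_mulVec]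
  set e : ↥Γ → ↥Γ := fun k => ⟨A *ᵥ ↑k, hAΓ ↑k k.2⟩ with he
  have hcoee : ∀ k : ↥Γ, ((e k : ↥Γ) : Fin d → ℝ) = A *ᵥ ↑k := fun k => rfl
  have hinje : Function.Injective e := by
    intro k₁ k₂ h
    have h' := congrArg (fun γ : ↥Γ => (γ : Fin d → ℝ)) h
    simp only [hcoee] at h'
    have := congrArg (fun v => A⁻¹ *ᵥ v) h'
    simp only [hAinvA] at this
    exact Subtype.ext this
  set ΛG : Finset ↥Γ := Λ.preimage (Subtype.val : ↥Γ → (Fin d → ℝ))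
    (Subtype.val_injective.injOn) with hΛGdef
  have hmemΛG : ∀ l : ↥Γ, l ∈ ΛG ↔ (↑l : Fin d → ℝ) ∈ Λ := by
    intro l; rw [hΛGdef, Finset.mem_preimage]
  have hcoesub : ∀ a b : ↥Γ, ((a - b : ↥Γ) : Fin d → ℝ) = (↑a : Fin d → ℝ) - ↑b :=
    fun a b => rfl
  set z : ↥Γ → ℂ := fun m => ∑ᶠ k : ↥Γ, c (A *ᵥ ↑k - ↑m) * y k with hzdef
  -- membership helper: if the coefficient is nonzero then we get an element of ΛG
  have hΛGmem : ∀ k m : ↥Γ, c (A *ᵥ (↑k : Fin d → ℝ) - ↑m) ≠ 0 →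
      (e k - m) ∈ ΛG ∧ ((e k - m : ↥Γ) : Fin d → ℝ) = A *ᵥ ↑k - ↑m := by
    intro k m hcne
    have hmem : A *ᵥ (↑k : Fin d → ℝ) - ↑m ∈ Λ := by
      by_contra hnot
      exact hcne (hc _ hnot)
    have hco : ((e k - m : ↥Γ) : Fin d → ℝ) = A *ᵥ ↑k - ↑m := by
      rw [hcoesub, hcoee]
    exact ⟨(hmemΛG _).mpr (by rw [hco]; exact hmem), hco⟩
  have hzsupfin : ∀ m : ↥Γ,
      (Function.support fun k : ↥Γ => c (A *ᵥ ↑k - ↑m) * y k).Finite := by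
    intro m
    apply Set.Finite.subset (Set.Finite.preimage (hinje.injOn)
      (Finset.finite_toSet (ΛG.image (fun l => m + l))))
    intro k hk
    simp only [Function.mem_support] at hk
    have hcne : c (A *ᵥ (↑k : Fin d → ℝ) - ↑m) ≠ 0 := fun h => hk (by rw [h, zero_mul])
    obtain ⟨hlmem, _⟩ := hΛGmem k m hcne
    simp only [Set.mem_preimage, Finset.coe_image, Set.mem_image, Finset.mem_coe]
    exact ⟨e k - m, hlmem, by abel⟩
  -- ## The master relation z = θ • y
  have hzy : ∀ m : ↥Γ, z m = θ * y m := by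
    have hstar : ∀ u, ∑ᶠ m : ↥Γ, z m * φ (u + ↑m)
        = ∑ᶠ m : ↥Γ, (θ * y m) * φ (u + ↑m) := by
      intro u
      set x₀ : Fin d → ℝ := A⁻¹ *ᵥ u with hx₀
      have hux₀ : A *ᵥ x₀ = u := hAAinv u
      -- the finite set K' of relevant k's
      have hK'fin : {k : ↥Γ | ∃ l ∈ ΛG, φ (u + ↑(e k - l)) ≠ 0}.Finite := by
        apply Set.Finite.subset (Set.Finite.biUnion (Finset.finite_toSet ΛG)
          (fun l _ => Set.Finite.preimage (hinje.injOn) (hfin (u - ↑l))))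
        intro k hk
        obtain ⟨l, hl, hφne⟩ := hk
        refine Set.mem_biUnion hl ?_
        simp only [Set.mem_preimage, Set.mem_setOf_eq]
        have : u - ↑l + ↑(e k) = u + ↑(e k - l) := by
          rw [hcoesub]; abel
        rw [this]
        exact hφne
      set K' : Finset ↥Γ := hK'fin.toFinset with hK'
      have hmemK' : ∀ k : ↥Γ, k ∈ K' ↔ ∃ l ∈ ΛG, φ (u + ↑(e k - l)) ≠ 0 := by
        intro k; rw [hK', Set.Finite.mem_toFinset]; rfl
      set K0 : Finset ↥Γ := (hsupfin y x₀).toFinset with hK0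
      set K2 : Finset ↥Γ := K0 ∪ K' with hK2
      -- refinement equation in ΛG form
      have hstep2 : ∀ k : ↥Γ, φ (x₀ + ↑k) = ∑ l ∈ ΛG, c ↑l * φ (u + ↑(e k - l)) := by
        intro k
        rw [href (x₀ + ↑k)]
        rw [← Finset.sum_preimage (Subtype.val : ↥Γ → (Fin d → ℝ)) Λ
          (Subtype.val_injective.injOn) (fun l => c l * φ (A *ᵥ (x₀ + ↑k) - l))
          (fun x hx hr => absurd ⟨⟨x, hΛ hx⟩, rfl⟩ hr)]
        apply Finset.sum_congr rfl
        intro l _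
        congr 2
        rw [Matrix.mulVec_add, hux₀, hcoesub, hcoee]
        abel
      -- the finite set M of relevant m's
      set M : Finset ↥Γ := (K' ×ˢ ΛG).image (fun q : ↥Γ × ↥Γ => e q.1 - q.2) with hM
      have hsupz : (Function.support fun m : ↥Γ => z m * φ (u + ↑m)) ⊆ ↑M := by
        intro m hm
        simp only [Function.mem_support] at hm
        have hφne : φ (u + ↑m) ≠ 0 := fun h => hm (by rw [h, mul_zero])
        have hzne : z m ≠ 0 := fun h => hm (by rw [h, zero_mul])
        have hex : ∃ k : ↥Γ, c (A *ᵥ (↑k : Fin d → ℝ) - ↑m) * y k ≠ 0 := by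
          by_contra hall
          push_neg at hall
          exact hzne (by rw [hzdef]; exact finsum_eq_zero_of_forall_eq_zero hall)
        obtain ⟨k, hk⟩ := hex
        have hcne : c (A *ᵥ (↑k : Fin d → ℝ) - ↑m) ≠ 0 := fun h => hk (by rw [h, zero_mul])
        obtain ⟨hlmem, hco⟩ := hΛGmem k m hcne
        have hmeq : m = e k - (e k - m) := by abel
        have hkK' : k ∈ K' := by
          rw [hmemK']
          exact ⟨e k - m, hlmem, by rw [← hmeq]; exact hφne⟩
        simp only [hM, Finset.coe_image, Set.mem_image, Finset.mem_coe,
          Finset.mem_product]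
        exact ⟨(k, e k - m), ⟨hkK', hlmem⟩, hmeq.symm⟩
      -- rewriting each z m as a finite sum over K'
      have hstep5 : ∀ m : ↥Γ, z m * φ (u + ↑m)
          = (∑ k ∈ K', c (A *ᵥ ↑k - ↑m) * y k) * φ (u + ↑m) := by
        intro m
        by_cases hφm : φ (u + ↑m) = 0
        · rw [hφm, mul_zero, mul_zero]
        congr 1
        rw [hzdef]
        apply finsum_eq_sum_of_support_subset
        intro k hk
        simp only [Function.mem_support] at hk
        have hcne : c (A *ᵥ (↑k : Fin d → ℝ) - ↑m) ≠ 0 := fun h => hk (by rw [h, zero_mul])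
        obtain ⟨hlmem, _⟩ := hΛGmem k m hcne
        have hmeq : m = e k - (e k - m) := by abel
        simp only [Finset.mem_coe]
        rw [hmemK']
        exact ⟨e k - m, hlmem, by rw [← hmeq]; exact hφm⟩
      -- regroup the double sum
      have hstep7 : ∀ k ∈ K', ∑ m ∈ M, (c (A *ᵥ ↑k - ↑m) * y k) * φ (u + ↑m)
          = ∑ l ∈ ΛG, (c ↑l * y k) * φ (u + ↑(e k - l)) := by
        intro k hkK'
        have hMk : ΛG.image (fun l => e k - l) ⊆ M := by
          intro m hm
          obtain ⟨l, hl, rfl⟩ := Finset.mem_image.mp hm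
          rw [hM]
          exact Finset.mem_image.mpr ⟨(k, l), Finset.mem_product.mpr ⟨hkK', hl⟩, rfl⟩
        rw [← Finset.sum_subset hMk]
        · rw [Finset.sum_image (fun a _ b _ h => sub_right_injective h)]
          apply Finset.sum_congr rfl
          intro l _
          have harg : A *ᵥ (↑k : Fin d → ℝ) - ↑(e k - l) = ↑l := by
            rw [hcoesub, hcoee]; abel
          rw [harg]
        · intro m _ hm
          by_cases hcm : c (A *ᵥ (↑k : Fin d → ℝ) - ↑m) = 0
          · rw [hcm, zero_mul, zero_mul]
          obtain ⟨hlmem, _⟩ := hΛGmem k m hcm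
          exfalso
          apply hm
          apply Finset.mem_image.mpr
          exact ⟨e k - m, hlmem, by abel⟩
      -- chain of equalities
      have hK'K2 : K' ⊆ K2 := Finset.subset_union_right
      calc ∑ᶠ m : ↥Γ, z m * φ (u + ↑m)
          = ∑ m ∈ M, z m * φ (u + ↑m) :=
            finsum_eq_sum_of_support_subset _ hsupz
        _ = ∑ m ∈ M, ∑ k ∈ K', (c (A *ᵥ ↑k - ↑m) * y k) * φ (u + ↑m) := by
            apply Finset.sum_congr rfl
            intro m _
            rw [hstep5 m, Finset.sum_mul]
        _ = ∑ k ∈ K', ∑ m ∈ M, (c (A *ᵥ ↑k - ↑m) * y k) * φ (u + ↑m) :=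
            Finset.sum_comm
        _ = ∑ k ∈ K', ∑ l ∈ ΛG, (c ↑l * y k) * φ (u + ↑(e k - l)) :=
            Finset.sum_congr rfl hstep7
        _ = ∑ k ∈ K', y k * φ (x₀ + ↑k) := by
            apply Finset.sum_congr rfl
            intro k _
            rw [hstep2 k, Finset.mul_sum]
            apply Finset.sum_congr rfl
            intro l _
            ring
        _ = ∑ k ∈ K2, y k * φ (x₀ + ↑k) := by
            apply Finset.sum_subset hK'K2
            intro k _ hk
            rw [hstep2 k]
            rw [Finset.mul_sum]
            apply Finset.sum_eq_zero
            intro l hl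
            have : φ (u + ↑(e k - l)) = 0 := by
              by_contra hne
              exact hk ((hmemK' k).mpr ⟨l, hl, hne⟩)
            rw [this, mul_zero, mul_zero]
        _ = ∑ᶠ k : ↥Γ, y k * φ (x₀ + ↑k) := by
            symm
            apply finsum_eq_sum_of_support_subset
            intro k hk
            apply Finset.mem_coe.mpr
            apply Finset.mem_union_left
            rw [hK0, Set.Finite.mem_toFinset]
            exact hk
        _ = MvPolynomial.eval (fun j => ((x₀ j : ℝ) : ℂ)) p := (hy x₀).symm
        _ = θ * MvPolynomial.eval (fun j => ((u j : ℝ) : ℂ)) p := hkey u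
        _ = θ * ∑ᶠ m : ↥Γ, y m * φ (u + ↑m) := by rw [hy u]
        _ = ∑ᶠ m : ↥Γ, (θ * y m) * φ (u + ↑m) := by
            rw [mul_finsum _ θ]
            exact finsum_congr fun m => (mul_assoc θ (y m) _).symm
    intro m
    exact congrFun (hU z (fun m => θ * y m) hstar) m
  -- ## y does not vanish identically on Ω n
  have hΩmono : ∀ a b : ℕ, a ≤ b → Ω a ⊆ Ω b := by
    intro a b hab
    induction b with
    | zero => rw [Nat.le_zero.mp hab]
    | succ b ih =>
      rcases Nat.eq_or_lt_of_le hab with heq | hlt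
      · rw [heq]
      · exact subset_trans (ih (Nat.lt_succ_iff.mp hlt)) (hmono b).subset
  have hynz : ¬ (∀ m ∈ Ω n, y m = 0) := by
    intro hy0
    have hall : ∀ j : ℕ, ∀ m ∈ Ω (n + j), y m = 0 := by
      intro j
      induction j with
      | zero => exact hy0
      | succ j ih =>
        intro m hm
        have hz0 : z m = 0 := by
          rw [hzdef]
          apply finsum_eq_zero_of_forall_eq_zero
          intro k
          by_cases hck : c (A *ᵥ (↑k : Fin d → ℝ) - ↑m) = 0
          · rw [hck, zero_mul]
          · have hmem : A *ᵥ (↑k : Fin d → ℝ) - ↑m ∈ Λ := by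
              by_contra hnot; exact hck (hc _ hnot)
            have hkΩ : k ∈ Ω (n + j) := by
              apply hstep (n + j) k
              exact ⟨m, by rwa [Nat.add_succ] at hm, A *ᵥ (↑k : Fin d → ℝ) - ↑m, hmem,
                by abel⟩
            rw [ih k hkΩ, mul_zero]
        have hthis := hzy m
        rw [hz0] at hthis
        rcases mul_eq_zero.mp hthis.symm with h | h
        · exact absurd h hθ0
        · exact h
    have hyall : ∀ m : ↥Γ, y m = 0 := by
      intro m
      have hm : m ∈ ⋃ N, (Ω N : Set ↥Γ) := by rw [hunion]; trivial
      obtain ⟨N, hN⟩ := Set.mem_iUnion.mp hm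
      exact hall N m (hΩmono N (n + N) (Nat.le_add_left N n) hN)
    obtain ⟨x₁, hx₁⟩ := exists_point_forms w hw0
    have h1 : MvPolynomial.eval (fun j => ((x₁ j : ℝ) : ℂ)) p ≠ 0 := by
      rw [hevalp]
      exact Finset.prod_ne_zero_iff.mpr fun i _ => pow_ne_zero _ (hx₁ i)
    apply h1
    rw [hy x₁]
    apply finsum_eq_zero_of_forall_eq_zero
    intro k
    rw [hyall k, zero_mul]
  -- ## restriction to Ω n is a left eigenvector
  have hrow : ∀ m ∈ Ω n, ∑ k ∈ Ω n, c (A *ᵥ ↑k - ↑m) * y k = θ * y m := by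
    intro m hm
    rw [← hzy m, hzdef]
    symm
    apply finsum_eq_sum_of_support_subset
    intro k hk
    simp only [Function.mem_support] at hk
    have hck : c (A *ᵥ (↑k : Fin d → ℝ) - ↑m) ≠ 0 := fun h => hk (by rw [h, zero_mul])
    have hmem : A *ᵥ (↑k : Fin d → ℝ) - ↑m ∈ Λ := by
      by_contra hnot; exact hck (hc _ hnot)
    exact hadm n k ⟨m, hm, A *ᵥ (↑k : Fin d → ℝ) - ↑m, hmem, by abel⟩
  -- ## conclusion via left eigenvector
  push_neg at hynz
  obtain ⟨m₀, hm₀, hym₀⟩ := hynz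
  set T : Matrix {x // x ∈ Ω n} {x // x ∈ Ω n} ℂ :=
    Matrix.of (fun i j : {x // x ∈ Ω n} => c (A.mulVec i.1.1 - j.1.1)) with hT
  set v : {x // x ∈ Ω n} → ℂ := fun j => y ↑j with hv
  have hv0 : v ≠ 0 := fun h => hym₀ (congrFun h ⟨m₀, hm₀⟩)
  have hvT : v ᵥ* T = θ • v := by
    funext j
    have h1 : (v ᵥ* T) j = ∑ i : {x // x ∈ Ω n}, y ↑i * c (A *ᵥ ↑↑i - ↑↑j) := rfl
    have h2 : ∑ i : {x // x ∈ Ω n}, y ↑i * c (A *ᵥ (↑↑i : Fin d → ℝ) - ↑↑j)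
        = ∑ i ∈ Ω n, y ↑i * c (A *ᵥ (↑i : Fin d → ℝ) - ↑↑j) :=
      Finset.sum_coe_sort (Ω n) (fun i => y i * c (A *ᵥ (↑i : Fin d → ℝ) - ↑↑j))
    rw [h1, h2]
    have h3 : ∑ i ∈ Ω n, y ↑i * c (A *ᵥ (↑i : Fin d → ℝ) - ↑↑j)
        = ∑ i ∈ Ω n, c (A *ᵥ (↑i : Fin d → ℝ) - ↑↑j) * y ↑i :=
      Finset.sum_congr rfl fun i _ => mul_comm _ _
    rw [h3, hrow ↑j j.2]
    rfl
  rw [spectrum.mem_iff]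
  intro hunit
  obtain ⟨Ninv, hN⟩ := hunit.exists_right_inv
  have hvz : v ᵥ* (algebraMap ℂ (Matrix {x // x ∈ Ω n} {x // x ∈ Ω n} ℂ) θ - T) = 0 := by
    rw [Matrix.vecMul_sub, hvT]
    have : v ᵥ* algebraMap ℂ (Matrix {x // x ∈ Ω n} {x // x ∈ Ω n} ℂ) θ = θ • v := by
      rw [Matrix.algebraMap_eq_diagonal]
      funext i
      rw [Matrix.vecMul_diagonal]
      simp [mul_comm]
    rw [this, sub_self]
  have : v = 0 := by
    calc v = v ᵥ* 1 := (Matrix.vecMul_one v).symm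
      _ = v ᵥ* ((algebraMap ℂ (Matrix {x // x ∈ Ω n} {x // x ∈ Ω n} ℂ) θ - T) * Ninv) := by
          rw [hN]
      _ = (v ᵥ* (algebraMap ℂ (Matrix {x // x ∈ Ω n} {x // x ∈ Ω n} ℂ) θ - T)) ᵥ* Ninv := by
          rw [Matrix.vecMul_vecMul]
      _ = 0 := by rw [hvz, Matrix.zero_vecMul]
  exact hv0 this
end
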